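/- arXiv:1301.7057 — 5 statements merged into one kernel-verified Lean document; each statement's English description precedes it below -/
import Mathlib

section
/- Let f : I ⊂ ℝ → ℝ be a differentiable mapping on the interior I° of an interval I, let a, b ∈ I° with a < b, and suppose the derivative f' is integrable on [a,b]. Then (f(a)+f(b))/2 − (1/(b−a))·∫_a^b f(x) dx = ((b−a)/2)·∫_0^1 ∫_0^1 [f'(t·a+(1−t)·b) − f'(s·a+(1−s)·b)]·(s−t) dt ds. -/
open MeasureTheory Real Set intervalIntegral

theorem stmt0
    (I : Set ℝ) (hIconn : Set.OrdConnected I)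
    (f f' : ℝ → ℝ)
    (hderiv : ∀ x ∈ interior I, HasDerivAt f (f' x) x)
    (a b : ℝ) (haI : a ∈ interior I) (hbI : b ∈ interior I) (hab : a < b)
    (hint : IntervalIntegrable f' MeasureTheory.volume a b) :
    (f a + f b) / 2 - (1 / (b - a)) * ∫ x in a..b, f x =
      (b - a) / 2 *
        ∫ s in (0:ℝ)..1, ∫ t in (0:ℝ)..1,
          (f' (t * a + (1 - t) * b) - f' (s * a + (1 - s) * b)) * (s - t) := by
  have hba : b - a ≠ 0 := sub_ne_zero.2 hab.ne'
  have hab' : a - b ≠ 0 := sub_ne_zero.2 hab.ne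
  have hsub : Set.uIcc a b ⊆ interior I := hIconn.interior.uIcc_subset haI hbI
  have hderiv' : ∀ x ∈ Set.uIcc b a, HasDerivAt f (f' x) x := fun x hx =>
    hderiv x (hsub (by rwa [Set.uIcc_comm] at hx))
  have hfc : ContinuousOn f (Set.uIcc a b) := fun x hx =>
    ((hderiv x (hsub hx)).continuousAt).continuousWithinAt
  have hfint : IntervalIntegrable f volume a b := hfc.intervalIntegrable
  set g : ℝ → ℝ := fun t => f' ((a - b) * t + b) with hg
  have hgint : IntervalIntegrable g volume 0 1 := by
    have h1 := (hint.symm.comp_add_right b).comp_mul_left (c := a - b)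
    simpa [hg, div_self hab'] using h1
  have htg : IntervalIntegrable (fun t => t * g t) volume 0 1 :=
    hgint.continuousOn_mul continuous_id.continuousOn
  set A : ℝ := ∫ t in (0:ℝ)..1, g t with hA'
  set B : ℝ := ∫ t in (0:ℝ)..1, t * g t with hB'
  -- inner integral
  have hinner : ∀ s : ℝ, (∫ t in (0:ℝ)..1, (g t - g s) * (s - t))
      = s * A - B - g s * (s - 1 / 2) := by
    intro s
    have hexp : ∀ t : ℝ, (g t - g s) * (s - t) = s * g t - t * g t - g s * (s - t) :=
      fun t => by ring
    simp_rw [hexp]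
    rw [intervalIntegral.integral_sub
        ((hgint.const_mul s).sub htg)
        ((by fun_prop : Continuous fun t : ℝ => g s * (s - t)).intervalIntegrable 0 1),
      intervalIntegral.integral_sub (hgint.const_mul s) htg,
      intervalIntegral.integral_const_mul, intervalIntegral.integral_const_mul]
    have h2 : (∫ t in (0:ℝ)..1, (s - t)) = s - 1 / 2 := by
      rw [intervalIntegral.integral_sub (intervalIntegrable_const) intervalIntegrable_id,
        integral_id, intervalIntegral.integral_const]
      norm_num
    rw [h2]
  -- outer integral
  have houter : (∫ s in (0:ℝ)..1, ∫ t in (0:ℝ)..1, (g t - g s) * (s - t)) = A - 2 * B := by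
    rw [intervalIntegral.integral_congr (g := fun s => s * A - B - g s * (s - 1 / 2))
      (fun s _ => hinner s)]
    have hexp : ∀ s : ℝ, s * A - B - g s * (s - 1 / 2)
        = (s * A - B) - (s * g s - (1 / 2) * g s) := fun s => by ring
    simp_rw [hexp]
    rw [intervalIntegral.integral_sub
        (((by fun_prop : Continuous fun s : ℝ => s * A).intervalIntegrable 0 1).sub
          (intervalIntegrable_const))
        (htg.sub (hgint.const_mul _)),
      intervalIntegral.integral_sub ((by fun_prop : Continuous fun s : ℝ => s * A).intervalIntegrable 0 1)
        intervalIntegrable_const,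
      intervalIntegral.integral_sub htg (hgint.const_mul _),
      intervalIntegral.integral_mul_const, intervalIntegral.integral_const_mul,
      integral_id, intervalIntegral.integral_const]
    norm_num
    ring
  -- FTC
  have hftc : (∫ x in b..a, f' x) = f a - f b :=
    intervalIntegral.integral_eq_sub_of_hasDerivAt hderiv' hint.symm
  -- compute A
  have hA : A = (a - b)⁻¹ * (f a - f b) := by
    rw [hA', hg]
    rw [intervalIntegral.integral_comp_mul_add f' hab' b]
    simp only [mul_zero, zero_add, mul_one, smul_eq_mul]
    rw [show (a - b) + b = a by ring, hftc]
  -- integration by parts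
  have hibp : (∫ x in b..a, (x - b) * f' x) = (a - b) * f a - ∫ x in b..a, f x := by
    have h := intervalIntegral.integral_mul_deriv_eq_deriv_mul_of_hasDerivAt
      (u := fun x => x - b) (v := f) (u' := fun _ => (1:ℝ)) (v' := f') (a := b) (b := a)
      ((continuous_id.sub continuous_const).continuousOn)
      (fun x hx => ((hderiv' x hx).continuousAt).continuousWithinAt)
      (fun x _ => (hasDerivAt_id x).sub_const b)
      (fun x hx => hderiv' x (Set.Ioo_subset_Icc_self hx))
      intervalIntegrable_const hint.symm
    simpa using h
  -- compute B
  have hB : B = (a - b)⁻¹ * ((a - b)⁻¹ * ((a - b) * f a - ∫ x in b..a, f x)) := by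
    have hrw : ∀ t : ℝ, t * g t = (fun x => (a - b)⁻¹ * ((x - b) * f' x)) ((a - b) * t + b) := by
      intro t
      simp only [hg]
      field_simp
      ring
    rw [hB']
    simp_rw [hrw]
    rw [intervalIntegral.integral_comp_mul_add (fun x => (a - b)⁻¹ * ((x - b) * f' x)) hab' b]
    simp only [mul_zero, zero_add, mul_one, smul_eq_mul]
    rw [show (a - b) + b = a by ring, intervalIntegral.integral_const_mul, hibp]
  -- conclude
  have hrw2 : ∀ s t : ℝ,
      (f' (t * a + (1 - t) * b) - f' (s * a + (1 - s) * b)) * (s - t)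
        = (g t - g s) * (s - t) := by
    intro s t
    simp only [hg]
    ring_nf
  simp_rw [hrw2]
  rw [houter, hA, hB]
  have hsymm : (∫ x in b..a, f x) = -∫ x in a..b, f x := intervalIntegral.integral_symm a b
  rw [hsymm]
  field_simp
  ring
end

section
/- Let I ⊃ [0,∞) be an open interval and let f : I → (0,∞) be differentiable on I with f' integrable on (a,b), where 0 ≤ a < b < ∞. Suppose |f'| is (α,m)-logarithmically convex on [0, b/m] for some (α,m) ∈ (0,1]×(0,1], and set η = |f'(a)| / |f'(b/m)|^m. Then: if η = 1, |(f(a)+f(b))/2 − (1/(b−a))·∫_a^b f(x) dx| ≤ ((b−a)/3)·|f'(b/m)|^m; and if η < 1, |(f(a)+f(b))/2 − (1/(b−a))·∫_a^b f(x) dx| ≤ ((b−a)/2)·|f'(b/m)|^m·(−α²·(ln η)² − 2α·ln η + 2η^α − 2)/(α³·(ln η)³). -/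
open MeasureTheory Real Set intervalIntegral

lemma aux1 {k : ℝ} (hk : k ≤ 0) : Real.exp k ≤ 1 + k + k^2/2 := by
  have hd : ∀ x : ℝ, HasDerivAt (fun y => 1 + y + y^2/2 - Real.exp y) (1 + x - Real.exp x) x := by
    intro x
    have h1 : HasDerivAt (fun y:ℝ => 1 + y + y^2/2) (1 + x) x := by
      have := ((hasDerivAt_id x).const_add 1).add ((hasDerivAt_pow 2 x).div_const 2)
      refine this.congr_deriv ?_
      push_cast; ring
    exact h1.sub (Real.hasDerivAt_exp x)
  have hanti : Antitone (fun y => 1 + y + y^2/2 - Real.exp y) :=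
    antitone_of_deriv_nonpos (fun x => (hd x).differentiableAt)
      (fun x => by rw [(hd x).deriv]; have := Real.add_one_le_exp x; linarith)
  have h0 := hanti hk
  simp [Real.exp_zero] at h0
  linarith

lemma aux2 {k : ℝ} (hk : k ≤ 0) : Real.exp k - 1 - k * Real.exp (k/2) ≤ 0 := by
  have hd : ∀ x : ℝ, HasDerivAt (fun y => 1 - Real.exp y + y * Real.exp (y/2))
      (-Real.exp x + (Real.exp (x/2) + x * (Real.exp (x/2) * (1/2)))) x := by
    intro x
    have h2 : HasDerivAt (fun y:ℝ => Real.exp (y/2)) (Real.exp (x/2) * (1/2)) x := by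
      exact (Real.hasDerivAt_exp (x/2)).comp x ((hasDerivAt_id x).div_const 2)
    have h3 : HasDerivAt (fun y:ℝ => y * Real.exp (y/2))
        (1 * Real.exp (x/2) + x * (Real.exp (x/2) * (1/2))) x := (hasDerivAt_id x).mul h2
    exact (((Real.hasDerivAt_exp x).const_sub 1).add h3).congr_deriv (by ring)
  have hanti : Antitone (fun y => 1 - Real.exp y + y * Real.exp (y/2)) := by
    refine antitone_of_deriv_nonpos (fun x => (hd x).differentiableAt) (fun x => ?_)
    rw [(hd x).deriv]
    have h1 : (1 + x/2) * Real.exp (x/2) ≤ Real.exp (x/2) * Real.exp (x/2) := by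
      have := Real.add_one_le_exp (x/2)
      nlinarith [Real.exp_pos (x/2)]
    rw [← Real.exp_add] at h1
    have : x/2 + x/2 = x := by ring
    rw [this] at h1
    nlinarith [Real.exp_pos (x/2)]
  have h0 := hanti hk
  simp [Real.exp_zero] at h0
  nlinarith


lemma auxFG {k : ℝ} (hk : k < 0) :
    -1/(2*k) + (Real.exp (k/2) - 1)/k^2 ≤ (2*Real.exp k - 2 - 2*k - k^2)/(2*k^3) := by
  have hne : k ≠ 0 := ne_of_lt hk
  have h3 : k^3 < 0 := by exact Odd.pow_neg (by decide) hk
  have hkey : (2*Real.exp k - 2 - 2*k - k^2)/(2*k^3) - (-1/(2*k) + (Real.exp (k/2) - 1)/k^2)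
      = (Real.exp k - 1 - k * Real.exp (k/2))/k^3 := by
    field_simp
    ring
  have hnum := aux2 hk.le
  have : 0 ≤ (Real.exp k - 1 - k * Real.exp (k/2))/k^3 := by
    rw [div_nonneg_iff]
    right
    exact ⟨hnum, h3.le⟩
  linarith

lemma eval_int {c b β : ℝ} (hβ : β ≠ 0) :
    ∫ x in c..b, (x - c) * Real.exp (β*(b-x)) = (c-b)/β - 1/β^2 + Real.exp (β*(b-c))/β^2 := by
  have hA : ∀ x ∈ Set.uIcc c b, HasDerivAt (fun y => ((c-y)/β - 1/β^2) * Real.exp (β*(b-y)))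
      ((x - c) * Real.exp (β*(b-x))) x := by
    intro x _
    have h1 : HasDerivAt (fun y:ℝ => (c-y)/β - 1/β^2) (-1/β) x := by
      have h := (((hasDerivAt_id x).const_sub c).div_const β).sub_const (1/β^2)
      exact h
    have h2 : HasDerivAt (fun y:ℝ => Real.exp (β*(b-y))) (Real.exp (β*(b-x)) * -β) x := by
      have := (Real.hasDerivAt_exp (β*(b-x))).comp x (((hasDerivAt_id x).const_sub b).const_mul β)
      exact this.congr_deriv (by ring)
    have := h1.mul h2
    refine this.congr_deriv ?_
    field_simp
    ring
  rw [intervalIntegral.integral_eq_sub_of_hasDerivAt hA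
    (by apply Continuous.intervalIntegrable; continuity)]
  rw [sub_self, mul_zero, Real.exp_zero]
  field_simp
  ring

lemma key {a b c M β : ℝ} (hab : a < b) (hc : c = (a+b)/2) (hM : 0 ≤ M) (hβ : β < 0)
    {φ : ℝ → ℝ} (hφint : IntervalIntegrable φ volume a b)
    (hφ0 : ∀ x ∈ Set.Icc a b, 0 ≤ φ x)
    (hφg : ∀ x ∈ Set.Icc a b, φ x ≤ M * Real.exp (β*(b-x))) :
    |∫ x in a..b, (x - c) * φ x| ≤ M * ((c-b)/β - 1/β^2 + Real.exp (β*(b-c))/β^2) := by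
  have hac : a ≤ c := by rw [hc]; linarith
  have hcb : c ≤ b := by rw [hc]; linarith
  have hsub1 : Set.uIcc a c ⊆ Set.uIcc a b :=
    Set.uIcc_subset_uIcc left_mem_uIcc (by rw [Set.mem_uIcc]; left; exact ⟨hac, hcb⟩)
  have hsub2 : Set.uIcc c b ⊆ Set.uIcc a b :=
    Set.uIcc_subset_uIcc (by rw [Set.mem_uIcc]; left; exact ⟨hac, hcb⟩) right_mem_uIcc
  have hcont : ContinuousOn (fun x : ℝ => x - c) (Set.uIcc a b) :=
    (continuous_id.sub continuous_const).continuousOn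
  have hφ1 : IntervalIntegrable (fun x => (x - c) * φ x) volume a c :=
    ((hφint.mono_set hsub1).continuousOn_mul (hcont.mono hsub1))
  have hφ2 : IntervalIntegrable (fun x => (x - c) * φ x) volume c b :=
    ((hφint.mono_set hsub2).continuousOn_mul (hcont.mono hsub2))
  have hgint : ∀ p q : ℝ, IntervalIntegrable (fun x => (x - c) * (M * Real.exp (β*(b-x)))) volume p q := by
    intro p q; apply Continuous.intervalIntegrable; continuity
  have hgint2 : ∀ p q : ℝ, IntervalIntegrable (fun x => (x - c) * (M * Real.exp (β*(x-a)))) volume p q := by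
    intro p q; apply Continuous.intervalIntegrable; continuity
  set Q : ℝ := ∫ x in c..b, (x - c) * (M * Real.exp (β*(b-x))) with hQdef
  have hsplit : (∫ x in a..b, (x - c) * φ x)
      = (∫ x in a..c, (x - c) * φ x) + ∫ x in c..b, (x - c) * φ x :=
    (intervalIntegral.integral_add_adjacent_intervals hφ1 hφ2).symm
  have hS2Q : (∫ x in c..b, (x - c) * φ x) ≤ Q := by
    apply intervalIntegral.integral_mono_on hcb hφ2 (hgint c b)
    intro x hx
    exact mul_le_mul_of_nonneg_left (hφg x ⟨hac.trans hx.1, hx.2⟩) (by linarith [hx.1])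
  have hS20 : 0 ≤ ∫ x in c..b, (x - c) * φ x := by
    apply intervalIntegral.integral_nonneg hcb
    intro x hx
    exact mul_nonneg (by linarith [hx.1]) (hφ0 x ⟨hac.trans hx.1, hx.2⟩)
  have hS10 : (∫ x in a..c, (x - c) * φ x) ≤ 0 := by
    have := intervalIntegral.integral_mono_on hac hφ1
      (_root_.intervalIntegrable_const (c := (0:ℝ)))
      (fun x hx => by nlinarith [hφ0 x ⟨hx.1, hx.2.trans hcb⟩, hx.2])
    simpa using this
  have hS1low : (∫ x in a..c, (x - c) * (M * Real.exp (β*(b-x)))) ≤ ∫ x in a..c, (x - c) * φ x := by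
    apply intervalIntegral.integral_mono_on hac (hgint a c) hφ1
    intro x hx
    exact mul_le_mul_of_nonpos_left (hφg x ⟨hx.1, hx.2.trans hcb⟩) (by linarith [hx.2])
  have hrefl : (∫ x in a..c, (x - c) * (M * Real.exp (β*(b-x))))
      = -(∫ x in c..b, (x - c) * (M * Real.exp (β*(x-a)))) := by
    have hcomp := intervalIntegral.integral_comp_sub_left (a := a) (b := c)
      (fun y => (y - c) * (M * Real.exp (β*(y-a)))) (a+b)
    rw [show a+b-c = c by rw [hc]; ring, show a+b-a = b by ring] at hcomp
    have hcg : (∫ x in a..c, (a+b-x - c) * (M * Real.exp (β*(a+b-x-a))))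
        = ∫ x in c..b, (x - c) * (M * Real.exp (β*(x-a))) := hcomp
    rw [← hcg]
    rw [← intervalIntegral.integral_neg]
    apply intervalIntegral.integral_congr
    intro x hx
    show (x - c) * (M * Real.exp (β*(b-x))) = -((a+b-x - c) * (M * Real.exp (β*(a+b-x-a))))
    rw [show β*(a+b-x-a) = β*(b-x) by ring, show a+b-x-c = -(x-c) by rw [hc]; ring]
    ring
  have hQ'le : (∫ x in c..b, (x - c) * (M * Real.exp (β*(x-a)))) ≤ Q := by
    apply intervalIntegral.integral_mono_on hcb (hgint2 c b) (hgint c b)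
    intro x hx
    have hxc : (0:ℝ) ≤ x - c := by linarith [hx.1]
    have hexp : Real.exp (β*(x-a)) ≤ Real.exp (β*(b-x)) := by
      apply Real.exp_le_exp.mpr
      have : b - x ≤ x - a := by
        have := hx.1; rw [hc] at this; linarith
      nlinarith
    exact mul_le_mul_of_nonneg_left (mul_le_mul_of_nonneg_left hexp hM) hxc
  have habs : |∫ x in a..b, (x - c) * φ x| ≤ Q := by
    rw [hsplit, abs_le]
    constructor
    · linarith
    · linarith
  have hQval : Q = M * ((c-b)/β - 1/β^2 + Real.exp (β*(b-c))/β^2) := by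
    rw [hQdef, ← eval_int (ne_of_lt hβ), ← intervalIntegral.integral_const_mul]
    apply intervalIntegral.integral_congr
    intro x hx
    show (x - c) * (M * Real.exp (β*(b-x))) = M * ((x - c) * Real.exp (β*(b-x)))
    ring
  rw [← hQval]
  exact habs

lemma rigid {f' : ℝ → ℝ} {a b α m : ℝ} (ha : 0 ≤ a) (hab : a < b)
    (hα : α ∈ Set.Ioc (0:ℝ) 1) (hm : m ∈ Set.Ioc (0:ℝ) 1)
    (hconv : ∀ x ∈ Set.Icc (0:ℝ) (b / m), ∀ y ∈ Set.Icc (0:ℝ) (b / m), ∀ t ∈ Set.Icc (0:ℝ) 1,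
      |f' (t * x + m * (1 - t) * y)| ≤ |f' (x)| ^ (t ^ α) * |f' (y)| ^ (m * (1 - t ^ α)))
    {p : ℝ} (hp : p ∈ Set.Icc (0:ℝ) (b / m)) (hp0 : f' p = 0) :
    ∀ z ∈ Set.Ioo a b, f' z = 0 := by
  intro z hz
  have hb : 0 < b := lt_of_le_of_lt (le_trans ha hz.1.le) hz.2
  have hz0 : 0 < z := lt_of_le_of_lt ha hz.1
  have hzb : z < b := hz.2
  have hm0 : 0 < m := hm.1
  have hmin0 : 0 < min z (b - z) := lt_min hz0 (by linarith)
  set t : ℝ := m * min z (b - z) / (2 * b) with htdef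
  have ht0 : 0 < t := div_pos (mul_pos hm0 hmin0) (by linarith)
  have hminb : min z (b - z) ≤ b := le_trans (min_le_left _ _) hzb.le
  have hmmin : m * min z (b - z) ≤ min z (b - z) := by
    nlinarith [hm.2, hmin0.le]
  have hth : t ≤ 1/2 := by
    rw [htdef, div_le_div_iff₀ (by linarith) (by norm_num)]
    nlinarith
  have htb : t * b = m * min z (b - z) / 2 := by
    rw [htdef]; field_simp
  have htp : t * p ≤ min z (b - z) / 2 := by
    have h1 : t * p ≤ t * (b / m) := mul_le_mul_of_nonneg_left hp.2 ht0.le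
    have h2 : t * (b / m) = min z (b - z) / 2 := by
      rw [htdef]; field_simp
    linarith
  have h1t : 0 < 1 - t := by linarith
  set y : ℝ := (z - t * p) / (m * (1 - t)) with hydef
  have htp0 : 0 ≤ t * p := mul_nonneg ht0.le hp.1
  have hy0 : 0 ≤ y := by
    apply div_nonneg _ (by positivity)
    have := min_le_left z (b - z)
    linarith
  have hyb : y ≤ b / m := by
    rw [hydef, div_le_div_iff₀ (by positivity) hm0]
    have h3 : t * b ≤ (b - z) / 2 := by
      rw [htb]
      have := min_le_right z (b - z)
      linarith
    nlinarith
  have heq : t * p + m * (1 - t) * y = z := by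
    rw [hydef]; field_simp; ring
  have hcb := hconv p hp y ⟨hy0, hyb⟩ t ⟨ht0.le, by linarith⟩
  rw [heq, hp0] at hcb
  have htα : (0:ℝ) < t ^ α := Real.rpow_pos_of_pos ht0 α
  rw [abs_zero, Real.zero_rpow htα.ne', zero_mul] at hcb
  exact abs_eq_zero.mp (le_antisymm hcb (abs_nonneg _))

lemma ptbound {f' : ℝ → ℝ} {a b α m : ℝ} (ha : 0 ≤ a) (hab : a < b)
    (hα : α ∈ Set.Ioc (0:ℝ) 1) (hm : m ∈ Set.Ioc (0:ℝ) 1)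
    (hconv : ∀ x ∈ Set.Icc (0:ℝ) (b / m), ∀ y ∈ Set.Icc (0:ℝ) (b / m), ∀ t ∈ Set.Icc (0:ℝ) 1,
      |f' (t * x + m * (1 - t) * y)| ≤ |f' (x)| ^ (t ^ α) * |f' (y)| ^ (m * (1 - t ^ α))) :
    ∀ x ∈ Set.Icc a b, |f' x| ≤
      |f' a| ^ (((b - x)/(b - a)) ^ α) * (|f' (b/m)| ^ m) ^ (1 - ((b - x)/(b - a)) ^ α) := by
  intro x hx
  have hb : 0 < b := lt_of_le_of_lt ha hab
  have hm0 : 0 < m := hm.1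
  have hba : 0 < b - a := by linarith
  have hbbm : b ≤ b / m := by
    rw [le_div_iff₀ hm0]; nlinarith [hm.2]
  set t : ℝ := (b - x)/(b - a) with htdef
  have ht : t ∈ Set.Icc (0:ℝ) 1 := by
    constructor
    · apply div_nonneg (by linarith [hx.2]) hba.le
    · rw [div_le_one hba]; linarith [hx.1]
  have hcb := hconv a ⟨ha, le_trans hab.le hbbm⟩ (b/m)
    ⟨div_nonneg hb.le hm0.le, le_refl _⟩ t ht
  have heq : t * a + m * (1 - t) * (b/m) = x := by
    rw [htdef]; field_simp; ring
  rw [heq] at hcb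
  rwa [Real.rpow_mul (abs_nonneg _)] at hcb

lemma ptbound2 {v M η α t : ℝ} (hM : 0 < M) (hη0 : 0 < η) (hη1 : η < 1)
    (hα : α ∈ Set.Ioc (0:ℝ) 1) (ht : t ∈ Set.Icc (0:ℝ) 1)
    (hv : v ≤ (η * M) ^ (t ^ α) * M ^ (1 - t ^ α)) :
    v ≤ M * Real.exp ((α * Real.log η) * t) := by
  have hsplit : (η * M) ^ (t ^ α) * M ^ (1 - t ^ α) = η ^ (t ^ α) * M := by
    rw [Real.mul_rpow hη0.le hM.le, mul_assoc, ← Real.rpow_add hM,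
      show t ^ α + (1 - t ^ α) = 1 by ring, Real.rpow_one]
  have htα : α * t ≤ t ^ α := by
    rcases eq_or_lt_of_le ht.1 with h0' | h0'
    · rw [← h0', Real.zero_rpow (ne_of_gt hα.1), mul_zero]
    · have h1 : t ^ (1:ℝ) ≤ t ^ α := Real.rpow_le_rpow_of_exponent_ge h0' ht.2 hα.2
      rw [Real.rpow_one] at h1
      nlinarith [hα.2, ht.1]
  have hm1 : η ^ (t ^ α) ≤ η ^ (α * t) :=
    Real.rpow_le_rpow_of_exponent_ge hη0 hη1.le htα
  have hkt : η ^ (α * t) = Real.exp ((α * Real.log η) * t) := by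
    rw [Real.rpow_def_of_pos hη0]
    congr 1
    ring
  calc v ≤ η ^ (t ^ α) * M := by rw [← hsplit]; exact hv
    _ ≤ η ^ (α * t) * M := mul_le_mul_of_nonneg_right hm1 hM.le
    _ = M * Real.exp ((α * Real.log η) * t) := by rw [hkt]; ring

lemma Qval {M k d : ℝ} (hd : d ≠ 0) (hk : k ≠ 0) :
    M * ((-(d/2))/(k/d) - 1/(k/d)^2 + Real.exp ((k/d)*(d/2))/(k/d)^2)
      = M * d^2 * (-1/(2*k) + (Real.exp (k/2) - 1)/k^2) := by
  rw [show (k/d)*(d/2) = k/2 by field_simp]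
  field_simp
  ring

set_option maxHeartbeats 1000000 in
theorem stmt1
    (I : Set ℝ) (hIopen : IsOpen I) (hIconn : Set.OrdConnected I)
    (hIci : Set.Ici (0:ℝ) ⊆ I)
    (f f' : ℝ → ℝ)
    (hfpos : ∀ x ∈ I, 0 < f x)
    (hderiv : ∀ x ∈ I, HasDerivAt f (f' x) x)
    (a b : ℝ) (ha : 0 ≤ a) (hab : a < b)
    (hint : IntervalIntegrable f' MeasureTheory.volume a b)
    (α m : ℝ) (hα : α ∈ Set.Ioc (0:ℝ) 1) (hm : m ∈ Set.Ioc (0:ℝ) 1)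
    (hconv : ∀ x ∈ Set.Icc (0:ℝ) (b / m), ∀ y ∈ Set.Icc (0:ℝ) (b / m), ∀ t ∈ Set.Icc (0:ℝ) 1,
      |f' (t * x + m * (1 - t) * y)| ≤ |f' (x)| ^ (t ^ α) * |f' (y)| ^ (m * (1 - t ^ α)))
    (η : ℝ) (hη : η = |f' a| / |f' (b / m)| ^ m) :
    (η = 1 → |(f a + f b) / 2 - (1 / (b - a)) * ∫ x in a..b, f x| ≤ (b - a) / 3 * |f' (b / m)| ^ m) ∧
    (η < 1 → |(f a + f b) / 2 - (1 / (b - a)) * ∫ x in a..b, f x| ≤ (b - a) / 2 * |f' (b / m)| ^ m *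
      ((-(α ^ 2 * Real.log η ^ 2) - 2 * α * Real.log η + 2 * η ^ α - 2) /
        (α ^ 3 * Real.log η ^ 3))) := by
  have hα0 : (0:ℝ) < α := hα.1
  have hm0 : (0:ℝ) < m := hm.1
  have hb : 0 < b := lt_of_le_of_lt ha hab
  have hba : 0 < b - a := by linarith
  have hIab : Set.Icc a b ⊆ I := fun x hx => hIci (le_trans ha hx.1)
  set M : ℝ := |f' (b/m)| ^ m with hMdef
  have hM0 : 0 ≤ M := Real.rpow_nonneg (abs_nonneg _) m
  set c : ℝ := (a+b)/2 with hcdef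
  have huIcc : Set.uIcc a b = Set.Icc a b := Set.uIcc_of_le hab.le
  have hfc : ContinuousOn f (Set.uIcc a b) := by
    rw [huIcc]
    exact fun x hx => ((hderiv x (hIab hx)).continuousAt).continuousWithinAt
  have hfint : IntervalIntegrable f volume a b := hfc.intervalIntegrable
  have hcontxc : ContinuousOn (fun x : ℝ => x - c) (Set.uIcc a b) :=
    (continuous_id.sub continuous_const).continuousOn
  have hJint : IntervalIntegrable (fun x => (x - c) * f' x) volume a b :=
    hint.continuousOn_mul hcontxc
  -- integration by parts
  have hJ : (∫ x in a..b, (x - c) * f' x) = (b-a)/2*(f a + f b) - ∫ x in a..b, f x := by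
    have hibp := intervalIntegral.integral_mul_deriv_eq_deriv_mul_of_hasDerivWithinAt
      (u := fun x => x - c) (v := f) (u' := fun _ => (1:ℝ)) (v' := f')
      (fun x _ => ((hasDerivAt_id x).sub_const c).hasDerivWithinAt)
      (fun x hx => (hderiv x (hIab (huIcc ▸ hx))).hasDerivWithinAt)
      intervalIntegrable_const hint
    rw [hibp]
    have h1 : (∫ x in a..b, (1:ℝ) * f x) = ∫ x in a..b, f x := by
      simp
    rw [h1, hcdef]
    ring
  have hin : (f a + f b) / 2 - (1 / (b - a)) * ∫ x in a..b, f x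
      = (∫ x in a..b, (x - c) * f' x) / (b - a) := by
    rw [hJ]
    field_simp
  have hLHS : |(f a + f b) / 2 - (1 / (b - a)) * ∫ x in a..b, f x|
      = |∫ x in a..b, (x - c) * f' x| / (b - a) := by
    rw [hin, abs_div, abs_of_pos hba]
  have hpt := ptbound (f' := f') ha hab hα hm hconv
  constructor
  · -- case η = 1
    intro h1
    have hMne : M ≠ 0 := by
      intro h0
      rw [hη, h0, div_zero] at h1
      norm_num at h1
    have hMpos : 0 < M := lt_of_le_of_ne hM0 (Ne.symm hMne)
    have hfa : |f' a| = M := by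
      rw [hη] at h1
      field_simp at h1
      exact h1
    have hbd : ∀ x ∈ Set.Icc a b, |f' x| ≤ M := by
      intro x hx
      have := hpt x hx
      rwa [hfa, ← Real.rpow_add hMpos, add_sub_cancel, Real.rpow_one] at this
    have habs1 : |∫ x in a..b, (x - c) * f' x| ≤ ∫ x in a..b, |(x - c) * f' x| :=
      intervalIntegral.abs_integral_le_integral_abs hab.le
    have habs2 : (∫ x in a..b, |(x - c) * f' x|) ≤ ∫ x in a..b, |x - c| * M := by
      apply intervalIntegral.integral_mono_on hab.le hJint.abs
      · exact (((continuous_id.sub continuous_const).abs.mul continuous_const)).intervalIntegrable _ _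
      · intro x hx
        rw [abs_mul]
        exact mul_le_mul_of_nonneg_left (hbd x hx) (abs_nonneg _)
    have hval : (∫ x in a..b, |x - c| * M) = M * (b-a)^2/4 := by
      have hac : a ≤ c := by rw [hcdef]; linarith
      have hcb : c ≤ b := by rw [hcdef]; linarith
      have hsplit : (∫ x in a..b, |x - c| * M)
          = (∫ x in a..c, |x - c| * M) + ∫ x in c..b, |x - c| * M := by
        symm
        apply intervalIntegral.integral_add_adjacent_intervals <;>
          exact (((continuous_id.sub continuous_const).abs.mul continuous_const)).intervalIntegrable _ _
      have e1 : (∫ x in a..c, |x - c| * M) = (∫ x in a..c, (c - x) * M) := by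
        apply intervalIntegral.integral_congr
        intro x hx
        rw [Set.uIcc_of_le hac] at hx
        show |x - c| * M = (c - x) * M
        rw [abs_of_nonpos (by linarith [hx.2]), neg_sub]
      have e2 : (∫ x in c..b, |x - c| * M) = (∫ x in c..b, (x - c) * M) := by
        apply intervalIntegral.integral_congr
        intro x hx
        rw [Set.uIcc_of_le hcb] at hx
        show |x - c| * M = (x - c) * M
        rw [abs_of_nonneg (by linarith [hx.1])]
      have v1 : (∫ x in a..c, (c - x) * M) = (c-a)^2/2 * M := by
        rw [intervalIntegral.integral_mul_const]
        have : (∫ x in a..c, (c - x)) = (∫ x in a..c, (c:ℝ)) - ∫ x in a..c, x := by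
          exact intervalIntegral.integral_sub intervalIntegrable_const
            (continuous_id.intervalIntegrable _ _)
        rw [this, intervalIntegral.integral_const, integral_id]
        simp [smul_eq_mul]
        ring_nf
        tauto
      have v2 : (∫ x in c..b, (x - c) * M) = (b-c)^2/2 * M := by
        rw [intervalIntegral.integral_mul_const]
        have : (∫ x in c..b, (x - c)) = (∫ x in c..b, x) - ∫ x in c..b, (c:ℝ) := by
          exact intervalIntegral.integral_sub (continuous_id.intervalIntegrable _ _)
            intervalIntegrable_const
        rw [this, intervalIntegral.integral_const, integral_id]
        simp [smul_eq_mul]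
        ring_nf
        tauto
      rw [hsplit, e1, e2, v1, v2, hcdef]
      ring
    rw [hLHS, div_le_iff₀ hba]
    calc |∫ x in a..b, (x - c) * f' x| ≤ M * (b-a)^2/4 := by
          rw [← hval]; exact le_trans habs1 habs2
      _ ≤ (b - a) / 3 * M * (b - a) := by nlinarith
  · -- case η < 1
    intro h2
    have hη0 : 0 ≤ η := by rw [hη]; exact div_nonneg (abs_nonneg _) hM0
    have hbbm : b ≤ b / m := by rw [le_div_iff₀ hm0]; nlinarith [hm.2]
    have hIccsub : Set.Icc a b ⊆ Set.Icc (0:ℝ) (b/m) :=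
      fun x hx => ⟨le_trans ha hx.1, le_trans hx.2 hbbm⟩
    have hzeroJ : (∀ z ∈ Set.Ioo a b, f' z = 0) → (∫ x in a..b, (x - c) * f' x) = 0 := by
      intro hz
      have hbnull : (volume : Measure ℝ) {b} = 0 := Real.volume_singleton
      have hae0 : ∀ᵐ x ∂(volume : Measure ℝ), x ∉ ({b} : Set ℝ) :=
        (MeasureTheory.measure_eq_zero_iff_ae_notMem).mp hbnull
      have hae : ∀ᵐ x ∂(volume : Measure ℝ), x ∈ Set.uIoc a b → (x - c) * f' x = (0:ℝ) := by
        filter_upwards [hae0] with x hxb hxI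
        rw [Set.uIoc_of_le hab.le] at hxI
        have hxm : x ∈ Set.Ioo a b := ⟨hxI.1, lt_of_le_of_ne hxI.2 (by simpa using hxb)⟩
        rw [hz x hxm, mul_zero]
      calc (∫ x in a..b, (x - c) * f' x) = ∫ x in a..b, (0:ℝ) :=
            intervalIntegral.integral_congr_ae hae
        _ = 0 := by simp
    rcases eq_or_lt_of_le hη0 with hzη | hposη
    · -- η = 0
      have hdiv0 : |f' a| / M = 0 := by rw [← hη, ← hzη]
      have hexp0 : ∃ p ∈ Set.Icc (0:ℝ) (b/m), f' p = 0 := by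
        rcases div_eq_zero_iff.mp hdiv0 with h | h
        · exact ⟨a, ⟨ha, le_trans hab.le hbbm⟩, abs_eq_zero.mp h⟩
        · refine ⟨b/m, ⟨div_nonneg hb.le hm0.le, le_refl _⟩, ?_⟩
          by_contra hne
          exact absurd h (ne_of_gt (Real.rpow_pos_of_pos (abs_pos.mpr hne) m))
      obtain ⟨p, hp, hp0⟩ := hexp0
      have hz := rigid ha hab hα hm hconv hp hp0
      rw [hLHS, hzeroJ hz, abs_zero, zero_div, ← hzη]
      simp [Real.log_zero, Real.zero_rpow (ne_of_gt hα0)]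
    · -- 0 < η < 1
      have hL : Real.log η < 0 := Real.log_neg hposη h2
      have hk : α * Real.log η < 0 := mul_neg_of_pos_of_neg hα0 hL
      have hk3 : (α * Real.log η)^3 < 0 := Odd.pow_neg (by decide) hk
      have hMpos : 0 < M := by
        rcases lt_or_eq_of_le hM0 with h | h
        · exact h
        · exfalso; rw [hη, ← h, div_zero] at hposη; exact lt_irrefl 0 hposη
      have hηα : η ^ α = Real.exp (α * Real.log η) := by
        rw [Real.rpow_def_of_pos hposη, mul_comm]
      have hCeq : (-(α ^ 2 * Real.log η ^ 2) - 2 * α * Real.log η + 2 * η ^ α - 2)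
            / (α ^ 3 * Real.log η ^ 3)
          = (2*Real.exp (α * Real.log η) - 2 - 2*(α * Real.log η) - (α * Real.log η)^2)
            / (α * Real.log η)^3 := by
        rw [hηα]
        congr 1 <;> ring
      have hβ : α * Real.log η / (b - a) < 0 := div_neg_of_neg_of_pos hk hba
      have hfa : |f' a| = η * M := by rw [hη, div_mul_cancel₀ _ (ne_of_gt hMpos)]
      have hptk : ∀ x ∈ Set.Icc a b,
          |f' x| ≤ M * Real.exp ((α * Real.log η / (b - a)) * (b - x)) := by
        intro x hx
        have h0 := hpt x hx
        rw [← hMdef, hfa] at h0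
        have ht : (b - x)/(b - a) ∈ Set.Icc (0:ℝ) 1 :=
          ⟨div_nonneg (by linarith [hx.2]) hba.le, by rw [div_le_one hba]; linarith [hx.1]⟩
        have hmain := ptbound2 hMpos hposη h2 hα ht h0
        rw [show (α * Real.log η) * ((b - x)/(b-a))
          = (α * Real.log η / (b - a)) * (b - x) by ring] at hmain
        exact hmain
      by_cases hex : ∃ p ∈ Set.Icc a b, f' p = 0
      · obtain ⟨p, hp, hp0⟩ := hex
        have hz := rigid ha hab hα hm hconv (hIccsub hp) hp0
        rw [hLHS, hzeroJ hz, abs_zero, zero_div, hCeq]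
        apply mul_nonneg (mul_nonneg (by linarith) hM0)
        rw [div_nonneg_iff]
        right
        exact ⟨by nlinarith [aux1 hk.le], hk3.le⟩
      · push_neg at hex
        have hdarb : Set.OrdConnected (f' '' Set.Icc a b) :=
          Set.OrdConnected.image_hasDerivWithinAt Set.ordConnected_Icc
            (fun x hx => (hderiv x (hIab hx)).hasDerivWithinAt)
        have hnz : (0:ℝ) ∉ f' '' Set.Icc a b := by
          rintro ⟨p, hp, hp0⟩
          exact hex p hp hp0
        have hsign : (∀ x ∈ Set.Icc a b, 0 ≤ f' x) ∨ (∀ x ∈ Set.Icc a b, f' x ≤ 0) := by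
          by_cases hsb : 0 < f' b
          · left
            intro x hx
            by_contra hneg
            push_neg at hneg
            apply hnz
            apply hdarb.uIcc_subset (Set.mem_image_of_mem f' hx)
              (Set.mem_image_of_mem f' (Set.right_mem_Icc.mpr hab.le))
            rw [Set.mem_uIcc]
            exact Or.inl ⟨hneg.le, hsb.le⟩
          · right
            intro x hx
            by_contra hpos
            push_neg at hpos hsb
            apply hnz
            apply hdarb.uIcc_subset (Set.mem_image_of_mem f' hx)
              (Set.mem_image_of_mem f' (Set.right_mem_Icc.mpr hab.le))
            rw [Set.mem_uIcc]
            exact Or.inr ⟨hsb, hpos.le⟩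
        have hQbound : |∫ x in a..b, (x - c) * f' x|
            ≤ M * ((c-b)/(α * Real.log η / (b - a)) - 1/(α * Real.log η / (b - a))^2
              + Real.exp ((α * Real.log η / (b - a))*(b-c))/(α * Real.log η / (b - a))^2) := by
          rcases hsign with hpos' | hneg'
          · exact key hab hcdef hM0 hβ hint hpos'
              (fun x hx => le_trans (le_abs_self _) (hptk x hx))
          · have hneg2 : (∫ x in a..b, (x - c) * f' x)
                = -(∫ x in a..b, (x - c) * (-(f' x))) := by
              rw [← intervalIntegral.integral_neg]
              congr 1
              funext x
              ring
            rw [hneg2, abs_neg]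
            exact key hab hcdef hM0 hβ hint.neg
              (fun x hx => neg_nonneg.mpr (hneg' x hx))
              (fun x hx => le_trans (neg_le_abs _) (hptk x hx))
        have hQval : M * ((c-b)/(α * Real.log η / (b - a)) - 1/(α * Real.log η / (b - a))^2
              + Real.exp ((α * Real.log η / (b - a))*(b-c))/(α * Real.log η / (b - a))^2)
            = M * (b-a)^2 * (-1/(2*(α * Real.log η))
              + (Real.exp ((α * Real.log η)/2) - 1)/(α * Real.log η)^2) := by
          rw [show c - b = -((b-a)/2) by rw [hcdef]; ring,
            show b - c = (b-a)/2 by rw [hcdef]; ring]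
          exact Qval (ne_of_gt hba) (ne_of_lt hk)
        have hFG := auxFG hk
        rw [hLHS, hCeq, div_le_iff₀ hba]
        calc |∫ x in a..b, (x - c) * f' x|
            ≤ M * (b-a)^2 * (-1/(2*(α * Real.log η))
              + (Real.exp ((α * Real.log η)/2) - 1)/(α * Real.log η)^2) := by
              rw [← hQval]; exact hQbound
          _ ≤ M * (b-a)^2 * ((2*Real.exp (α * Real.log η) - 2 - 2*(α * Real.log η)
              - (α * Real.log η)^2)/(2*(α * Real.log η)^3)) :=
              mul_le_mul_of_nonneg_left hFG (by positivity)
          _ = (b - a) / 2 * M * ((2*Real.exp (α * Real.log η) - 2 - 2*(α * Real.log η)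
              - (α * Real.log η)^2) / (α * Real.log η)^3) * (b - a) := by
              have hkne : α * Real.log η ≠ 0 := ne_of_lt hk
              field_simp
end

section
/- Let I ⊃ [0,∞) be an open interval and let f : I → (0,∞) be differentiable on I with f' integrable on (a,b), where 0 ≤ a < b < ∞. Suppose |f'|^q is (α,m)-logarithmically convex on [0, b/m] for some (α,m) ∈ (0,1]×(0,1] and p, q > 1 with 1/p + 1/q = 1, and set η = |f'(a)| / |f'(b/m)|^m. Then: if η = 1, |(f(a)+f(b))/2 − (1/(b−a))·∫_a^b f(x) dx| ≤ (b−a)·|f'(b/m)|^m·(2/((p+1)(p+2)))^{1/p}; and if η < 1, |(f(a)+f(b))/2 − (1/(b−a))·∫_a^b f(x) dx| ≤ (b−a)·|f'(b/m)|^m·(2/((p+1)(p+2)))^{1/p}·((η^{αq} − 1)/(αq·ln η))^{1/q}. -/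
open MeasureTheory Real Set intervalIntegral


-- 2^{p+1} ≥ p+2 for p ≥ 1
lemma aux_two_rpow {p : ℝ} (hp : 1 ≤ p) : p + 2 ≤ 2 * (2:ℝ) ^ p := by
  have h1 : (2:ℝ) ^ p = 2 * (2:ℝ) ^ (p - 1) := by
    nth_rewrite 2 [show (2:ℝ) = (2:ℝ) ^ (1:ℝ) by rw [Real.rpow_one]]
    rw [← Real.rpow_add (by norm_num)]
    ring_nf
  have h3 : (2:ℝ) ^ (p - 1) = Real.exp ((p - 1) * Real.log 2) := by
    rw [Real.rpow_def_of_pos (by norm_num), mul_comm]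
  have hlog : (1:ℝ)/2 ≤ Real.log 2 := by
    have := Real.log_two_gt_d9
    linarith
  have h5 := Real.add_one_le_exp ((p-1) * Real.log 2)
  have hpm : (0:ℝ) ≤ p - 1 := by linarith
  nlinarith

lemma aux_const {p : ℝ} (hp : 1 < p) : ((1:ℝ)/2)^p / (p+1) ≤ 2 / ((p+1)*(p+2)) := by
  have hp1 : (0:ℝ) < p + 1 := by linarith
  have hp2 : (0:ℝ) < p + 2 := by linarith
  have h2p : (0:ℝ) < (2:ℝ) ^ p := Real.rpow_pos_of_pos (by norm_num) p
  have hhalf : ((1:ℝ)/2)^p = ((2:ℝ)^p)⁻¹ := by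
    rw [one_div, Real.inv_rpow (by norm_num : (0:ℝ) ≤ 2)]
  rw [hhalf, div_le_div_iff₀ (by positivity) (by positivity)]
  have := aux_two_rpow hp.le
  rw [inv_mul_le_iff₀ h2p]
  nlinarith

lemma aux_secant {u v : ℝ} (hu : u ≠ 0) (hv : v ≠ 0) (huv : u ≤ v) :
    (Real.exp u - 1)/u ≤ (Real.exp v - 1)/v := by
  have := convexOn_exp.secant_mono (a := 0) (x := u) (y := v)
    (Set.mem_univ _) (Set.mem_univ _) (Set.mem_univ _) hu hv huv
  simpa using this


lemma aux_pointwise (f' : ℝ → ℝ) (a b α m q η : ℝ) (ha : 0 ≤ a) (hab : a < b)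
    (hm : 0 < m) (hm1 : m ≤ 1) (hα : 0 < α) (hα1 : α ≤ 1) (hq : 0 < q)
    (hconv : ∀ x ∈ Set.Icc (0:ℝ) (b / m), ∀ y ∈ Set.Icc (0:ℝ) (b / m), ∀ t ∈ Set.Icc (0:ℝ) 1,
      |f' (t * x + m * (1 - t) * y)| ^ q ≤ (|f' (x)| ^ q) ^ (t ^ α) * (|f' (y)| ^ q) ^ (m * (1 - t ^ α)))
    (hB : 0 < |f' (b/m)|) (hfa : |f' a| = η * |f' (b/m)| ^ m) (hη0 : 0 ≤ η) :
    ∀ x ∈ Set.Icc a b, |f' x| ^ q ≤ η ^ (q * (((b-x)/(b-a))^α)) * (|f' (b/m)| ^ m) ^ q := by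
  intro x hx
  set B := |f' (b/m)| with hBdef
  have hL : (0:ℝ) < b - a := sub_pos.2 hab
  have hb : (0:ℝ) < b := lt_of_le_of_lt ha hab
  set t := (b - x)/(b - a) with htdef
  have ht : t ∈ Set.Icc (0:ℝ) 1 := by
    constructor
    · apply div_nonneg (by linarith [hx.2]) hL.le
    · rw [div_le_one hL]; linarith [hx.1]
  have ham : a ∈ Set.Icc (0:ℝ) (b/m) := by
    refine ⟨ha, ?_⟩
    rw [le_div_iff₀ hm]; nlinarith [hx.1]
  have hbm : b/m ∈ Set.Icc (0:ℝ) (b/m) := ⟨by positivity, le_refl _⟩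
  have hx_eq : t * a + m * (1 - t) * (b/m) = x := by
    rw [htdef]
    field_simp
    ring
  have h := hconv a ham (b/m) hbm t ht
  rw [hx_eq] at h
  refine h.trans (le_of_eq ?_)
  have htα : (0:ℝ) ≤ t ^ α := Real.rpow_nonneg ht.1 α
  have hBcollapse : ((B^m)^q)^(t^α) * (B^q)^(m*(1-t^α)) = (B^m)^q := by
    rw [← Real.rpow_mul hB.le m q, ← Real.rpow_mul hB.le (m*q) (t^α),
      ← Real.rpow_mul hB.le q (m*(1-t^α)), ← Real.rpow_add hB]
    congr 1
    ring
  rw [hfa, Real.mul_rpow hη0 (Real.rpow_nonneg hB.le m),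
    Real.mul_rpow (Real.rpow_nonneg hη0 q) (Real.rpow_nonneg (Real.rpow_nonneg hB.le m) q),
    mul_assoc, hBcollapse, Real.rpow_mul hη0]


lemma aux_core (f f' : ℝ → ℝ) (a b : ℝ) (hab : a < b)
    (hderiv : ∀ x ∈ Set.Icc a b, HasDerivAt f (f' x) x)
    (hint : IntervalIntegrable f' MeasureTheory.volume a b)
    (p q : ℝ) (hp : 1 < p) (hq : 1 < q) (hpq : 1/p + 1/q = 1)
    (M S : ℝ) (hM : 0 ≤ M) (hS : 0 ≤ S)
    (hbound : ∀ x ∈ Set.Ioc a b, |f' x| ≤ M)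
    (hSint : ∫ x in Set.Ioc a b, |f' x| ^ q ≤ M ^ q * ((b - a) * S)) :
    |(f a + f b)/2 - (1/(b-a)) * ∫ x in a..b, f x| ≤
      (b-a) * M * (((1:ℝ)/2)^p/(p+1)) ^ (1/p) * S ^ (1/q) := by
  have hL : (0:ℝ) < b - a := sub_pos.2 hab
  set L := b - a with hLdef
  set c := (a+b)/2 with hcdef
  clear_value L c
  have hp0 : (0:ℝ) < p := by linarith
  have hq0 : (0:ℝ) < q := by linarith
  -- Step 1: integration by parts identity
  have huIcc : Set.uIcc a b = Set.Icc a b := Set.uIcc_of_le hab.le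
  have hfint : IntervalIntegrable f MeasureTheory.volume a b := by
    apply ContinuousOn.intervalIntegrable
    rw [huIcc]
    exact fun x hx => (hderiv x hx).continuousAt.continuousWithinAt
  have hparts := intervalIntegral.integral_mul_deriv_eq_deriv_mul
    (u := fun x => x - c) (u' := fun _ => (1:ℝ)) (v := f) (v' := f')
    (fun x _ => (hasDerivAt_id x).sub_const c)
    (fun x hx => hderiv x (huIcc ▸ hx))
    intervalIntegrable_const hint
  have key : (f a + f b)/2 - (1/L) * ∫ x in a..b, f x = (1/L) * ∫ x in a..b, (x - c) * f' x := by
    rw [hparts]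
    simp only [one_mul]
    rw [hLdef, hcdef]
    have hne : b - a ≠ 0 := sub_ne_zero.2 hab.ne'
    field_simp
    ring
  rw [key]
  -- Step 2: abs into the integral
  have habs : |∫ x in a..b, (x - c) * f' x| ≤ ∫ x in a..b, |x - c| * |f' x| := by
    refine (intervalIntegral.abs_integral_le_integral_abs hab.le).trans (le_of_eq ?_)
    simp only [abs_mul]
  -- Step 3: Hölder
  set μ := MeasureTheory.volume.restrict (Set.Ioc a b) with hμdef
  haveI : IsFiniteMeasure μ := ⟨by rw [hμdef, Measure.restrict_apply_univ]; exact measure_Ioc_lt_top⟩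
  have hpq' : Real.HolderConjugate p q := Real.holderConjugate_iff.mpr ⟨hp, by rw [← one_div, ← one_div]; exact hpq⟩
  have hg_meas : AEStronglyMeasurable (fun x => |f' x|) μ := by
    have := hint.1.aestronglyMeasurable.norm
    simpa [Real.norm_eq_abs] using this
  have hf_meas : AEStronglyMeasurable (fun x : ℝ => |x - c|) μ :=
    (continuous_abs.comp (continuous_id.sub continuous_const)).aestronglyMeasurable
  have hfLp : MemLp (fun x : ℝ => |x - c|) (ENNReal.ofReal p) μ := by
    refine MemLp.of_bound hf_meas L ?_
    rw [hμdef]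
    refine (ae_restrict_iff' measurableSet_Ioc).2 (Filter.Eventually.of_forall fun x hx => ?_)
    rw [Real.norm_eq_abs, abs_abs, abs_le]
    obtain ⟨h1, h2⟩ := hx
    exact ⟨by simp only [hLdef]; linarith, by simp only [hLdef]; linarith⟩
  have hgLp : MemLp (fun x => |f' x|) (ENNReal.ofReal q) μ := by
    refine MemLp.of_bound hg_meas M ?_
    rw [hμdef]
    refine (ae_restrict_iff' measurableSet_Ioc).2 (Filter.Eventually.of_forall fun x hx => ?_)
    rw [Real.norm_eq_abs, abs_abs]
    exact hbound x hx
  have holder := MeasureTheory.integral_mul_le_Lp_mul_Lq_of_nonneg hpq'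
    (Filter.Eventually.of_forall fun x => abs_nonneg (x - c))
    (Filter.Eventually.of_forall fun x => abs_nonneg (f' x))
    hfLp hgLp
  -- connect interval integrals to set integrals
  have hconn : ∫ x in a..b, |x - c| * |f' x| = ∫ x, |x - c| * |f' x| ∂μ := by
    rw [intervalIntegral.integral_of_le hab.le]
  -- Step 4: compute ∫ |x-c|^p
  have hcont : Continuous (fun x : ℝ => |x - c| ^ p) :=
    (continuous_abs.comp (continuous_id.sub continuous_const)).rpow_const
      (fun x => Or.inr hp0.le)
  have hac : a ≤ c := by rw [hcdef]; linarith
  have hcb : c ≤ b := by rw [hcdef]; linarith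
  have hL2 : (0:ℝ) ≤ L/2 := by positivity
  have hsplit := intervalIntegral.integral_add_adjacent_intervals
    (hcont.intervalIntegrable (μ := MeasureTheory.volume) a c) (hcont.intervalIntegrable (μ := MeasureTheory.volume) c b)
  have hbc2 : b - c = L/2 := by rw [hcdef, hLdef]; ring
  have hca2 : c - a = L/2 := by rw [hcdef, hLdef]; ring
  have hyp : ∫ y in (0:ℝ)..(L/2), y ^ p = (L/2)^(p+1)/(p+1) := by
    rw [integral_rpow (Or.inl (by linarith))]
    rw [Real.zero_rpow (by positivity : p+1 ≠ 0)]
    ring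
  have h2 : ∫ x in c..b, |x - c| ^ p = (L/2)^(p+1)/(p+1) := by
    rw [intervalIntegral.integral_comp_sub_right (fun y => |y| ^ p) c, sub_self, hbc2, ← hyp]
    refine intervalIntegral.integral_congr fun y hy => ?_
    rw [Set.uIcc_of_le hL2] at hy
    rw [abs_of_nonneg hy.1]
  have h1 : ∫ x in a..c, |x - c| ^ p = (L/2)^(p+1)/(p+1) := by
    have flip : ∀ x : ℝ, |x - c| ^ p = |c - x| ^ p := fun x => by rw [abs_sub_comm]
    simp only [flip]
    rw [intervalIntegral.integral_comp_sub_left (fun y => |y| ^ p) c, sub_self, hca2, ← hyp]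
    refine intervalIntegral.integral_congr fun y hy => ?_
    rw [Set.uIcc_of_le hL2] at hy
    rw [abs_of_nonneg hy.1]
  set C0 : ℝ := ((1:ℝ)/2)^p/(p+1) with hC0def
  clear_value C0
  have hC0 : (0:ℝ) ≤ C0 := by
    rw [hC0def]
    positivity
  have hAval : ∫ x, |x - c| ^ p ∂μ = L^(p+1) * C0 := by
    rw [hμdef, ← intervalIntegral.integral_of_le hab.le, ← hsplit, h1, h2, hC0def]
    rw [show L/2 = L * (1/2) by ring, Real.mul_rpow hL.le (by norm_num),
      Real.rpow_add (by norm_num : (0:ℝ) < 1/2) p 1, Real.rpow_one]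
    ring
  -- Step 5: assemble
  have hApos : (0:ℝ) ≤ (∫ x, |x - c| ^ p ∂μ) ^ (1/p) := by
    rw [hAval]
    positivity
  have hstep : (∫ x, |f' x| ^ q ∂μ) ^ (1/q) ≤ (M ^ q * (L * S)) ^ (1/q) := by
    apply Real.rpow_le_rpow _ hSint (by positivity)
    exact MeasureTheory.integral_nonneg fun x => Real.rpow_nonneg (abs_nonneg _) q
  have hfinal_eq : (1/L) * ((L^(p+1) * C0)^(1/p) * (M ^ q * (L * S)) ^ (1/q))
      = L * M * C0 ^ (1/p) * S ^ (1/q) := by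
    rw [Real.mul_rpow (Real.rpow_nonneg hL.le _) hC0,
      Real.mul_rpow (Real.rpow_nonneg hM q) (by positivity : (0:ℝ) ≤ L * S),
      Real.mul_rpow hL.le hS,
      ← Real.rpow_mul hL.le, ← Real.rpow_mul hM,
      mul_one_div_cancel hq0.ne', Real.rpow_one]
    have h1p : (p+1)*(1/p) = 1 + 1/p := by
      rw [mul_one_div, add_div, div_self hp0.ne']
    have hsum : (p+1)*(1/p) + 1/q = 2 := by rw [h1p]; linarith
    have hLL : L^((p+1)*(1/p)) * L^(1/q) = L * L := by
      rw [← Real.rpow_add hL, hsum, show (2:ℝ) = (1:ℝ)+1 by norm_num,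
        Real.rpow_add hL, Real.rpow_one]
    have hLL2 : L ^ ((p+1)*(1/p)) * L ^ (1/q) / L = L := by
      rw [hLL]; field_simp
    linear_combination (C0 ^ (1/p) * M * S ^ (1/q)) * hLL2
  calc |1/L * ∫ x in a..b, (x - c) * f' x|
      = (1/L) * |∫ x in a..b, (x - c) * f' x| := by
        rw [abs_mul, abs_of_pos (by positivity : (0:ℝ) < 1/L)]
    _ ≤ (1/L) * ∫ x, |x - c| * |f' x| ∂μ := by
        apply mul_le_mul_of_nonneg_left _ (by positivity)
        rw [← hconn]
        exact habs
    _ ≤ (1/L) * ((∫ x, |x - c| ^ p ∂μ) ^ (1/p) * (∫ x, |f' x| ^ q ∂μ) ^ (1/q)) :=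
        mul_le_mul_of_nonneg_left holder (by positivity)
    _ ≤ (1/L) * ((L^(p+1) * C0)^(1/p) * (M ^ q * (L * S)) ^ (1/q)) := by
        apply mul_le_mul_of_nonneg_left _ (by positivity)
        rw [← hAval]
        exact mul_le_mul_of_nonneg_left hstep hApos
    _ = L * M * C0 ^ (1/p) * S ^ (1/q) := hfinal_eq


lemma aux_root {u v q : ℝ} (hu : 0 ≤ u) (hv : 0 ≤ v) (hq : 0 < q) (h : u ^ q ≤ v ^ q) : u ≤ v := by
  have h2 := Real.rpow_le_rpow (Real.rpow_nonneg hu q) h (by positivity : (0:ℝ) ≤ 1/q)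
  rwa [← Real.rpow_mul hu, ← Real.rpow_mul hv, mul_one_div_cancel hq.ne', Real.rpow_one,
    Real.rpow_one] at h2

lemma aux_intq (f' : ℝ → ℝ) (a b q M : ℝ) (hq0 : 0 < q)
    (hint : IntervalIntegrable f' MeasureTheory.volume a b)
    (hbd : ∀ x ∈ Set.Ioc a b, |f' x| ^ q ≤ M) :
    IntegrableOn (fun x => |f' x| ^ q) (Set.Ioc a b) MeasureTheory.volume := by
  have hmeas : AEStronglyMeasurable (fun x => |f' x| ^ q)
      (MeasureTheory.volume.restrict (Set.Ioc a b)) :=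
    (continuous_abs.rpow_const fun t => Or.inr hq0.le).comp_aestronglyMeasurable
      hint.1.aestronglyMeasurable
  haveI : IsFiniteMeasure (MeasureTheory.volume.restrict (Set.Ioc a b)) :=
    ⟨by rw [Measure.restrict_apply_univ]; exact measure_Ioc_lt_top⟩
  rw [IntegrableOn, ← memLp_one_iff_integrable]
  refine MemLp.of_bound hmeas M ?_
  refine (ae_restrict_iff' measurableSet_Ioc).2 (Filter.Eventually.of_forall fun x hx => ?_)
  rw [Real.norm_eq_abs, abs_of_nonneg (Real.rpow_nonneg (abs_nonneg _) q)]
  exact hbd x hx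

theorem stmt4
    (I : Set ℝ) (hIopen : IsOpen I) (hIconn : Set.OrdConnected I)
    (hIci : Set.Ici (0:ℝ) ⊆ I)
    (f f' : ℝ → ℝ)
    (hfpos : ∀ x ∈ I, 0 < f x)
    (hderiv : ∀ x ∈ I, HasDerivAt f (f' x) x)
    (a b : ℝ) (ha : 0 ≤ a) (hab : a < b)
    (hint : IntervalIntegrable f' MeasureTheory.volume a b)
    (α m : ℝ) (hα : α ∈ Set.Ioc (0:ℝ) 1) (hm : m ∈ Set.Ioc (0:ℝ) 1)
    (p q : ℝ) (hp : 1 < p) (hq : 1 < q) (hpq : 1 / p + 1 / q = 1)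
    (hconv : ∀ x ∈ Set.Icc (0:ℝ) (b / m), ∀ y ∈ Set.Icc (0:ℝ) (b / m), ∀ t ∈ Set.Icc (0:ℝ) 1,
      |f' (t * x + m * (1 - t) * y)| ^ q ≤ (|f' (x)| ^ q) ^ (t ^ α) * (|f' (y)| ^ q) ^ (m * (1 - t ^ α)))
    (η : ℝ) (hη : η = |f' a| / |f' (b / m)| ^ m) :
    (η = 1 → |(f a + f b) / 2 - (1 / (b - a)) * ∫ x in a..b, f x| ≤ (b - a) * |f' (b / m)| ^ m *
      (2 / ((p + 1) * (p + 2))) ^ (1 / p)) ∧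
    (η < 1 → |(f a + f b) / 2 - (1 / (b - a)) * ∫ x in a..b, f x| ≤ (b - a) * |f' (b / m)| ^ m *
      (2 / ((p + 1) * (p + 2))) ^ (1 / p) *
      ((η ^ (α * q) - 1) / (α * q * Real.log η)) ^ (1 / q)) := by
  obtain ⟨hα0, hα1⟩ := hα
  obtain ⟨hm0, hm1⟩ := hm
  have hq0 : (0:ℝ) < q := by linarith
  have hp0 : (0:ℝ) < p := by linarith
  have hL : (0:ℝ) < b - a := sub_pos.2 hab
  have hIccI : Set.Icc a b ⊆ I := fun x hx => hIci (le_trans ha hx.1)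
  have hderiv' : ∀ x ∈ Set.Icc a b, HasDerivAt f (f' x) x := fun x hx => hderiv x (hIccI hx)
  set B := |f' (b/m)| with hBdef
  set M' := B ^ m with hM'def
  have hBnn : 0 ≤ B := abs_nonneg _
  have hM'nn : 0 ≤ M' := Real.rpow_nonneg hBnn m
  have hBpos_of_ne : M' ≠ 0 → 0 < B := by
    intro hne
    rcases eq_or_lt_of_le hBnn with h | h
    · exact absurd (by rw [hM'def, ← h, Real.zero_rpow hm0.ne']) hne
    · exact h
  constructor
  · -- η = 1
    intro hη1
    rw [hη1] at hη
    have hM'ne : M' ≠ 0 := by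
      intro h
      rw [h, div_zero] at hη
      norm_num at hη
    have hB0 : 0 < B := hBpos_of_ne hM'ne
    have hM'0 : 0 < M' := Real.rpow_pos_of_pos hB0 m
    have hfa : |f' a| = 1 * M' := by
      rw [one_mul]
      field_simp [hM'ne] at hη
      linarith
    have hpt := aux_pointwise f' a b α m q 1 ha hab hm0 hm1 hα0 hα1 hq0 hconv hB0 hfa zero_le_one
    have hptq : ∀ x ∈ Set.Icc a b, |f' x| ^ q ≤ M' ^ q := by
      intro x hx
      have h := hpt x hx
      rwa [Real.one_rpow, one_mul] at h
    have hbound : ∀ x ∈ Set.Ioc a b, |f' x| ≤ M' := fun x hx =>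
      aux_root (abs_nonneg _) hM'nn hq0 (hptq x (Set.Ioc_subset_Icc_self hx))
    have hSint : ∫ x in Set.Ioc a b, |f' x| ^ q ≤ M' ^ q * ((b - a) * 1) := by
      have hintq := aux_intq f' a b q (M' ^ q) hq0 hint
        (fun x hx => hptq x (Set.Ioc_subset_Icc_self hx))
      calc ∫ x in Set.Ioc a b, |f' x| ^ q
          ≤ ∫ _x in Set.Ioc a b, M' ^ q := by
            refine setIntegral_mono_on hintq ?_ measurableSet_Ioc
              (fun x hx => hptq x (Set.Ioc_subset_Icc_self hx))
            exact integrableOn_const measure_Ioc_lt_top.ne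
        _ = M' ^ q * ((b - a) * 1) := by
            rw [setIntegral_const, Real.volume_real_Ioc_of_le hab.le, smul_eq_mul]
            ring
    have hcore := aux_core f f' a b hab hderiv' hint p q hp hq hpq M' 1 hM'nn zero_le_one
      hbound hSint
    rw [Real.one_rpow, mul_one] at hcore
    refine hcore.trans ?_
    exact mul_le_mul_of_nonneg_left
      (Real.rpow_le_rpow (by positivity) (aux_const hp) (by positivity))
      (by positivity)
  · -- η < 1
    intro hη1
    have hη0 : 0 ≤ η := by rw [hη]; positivity
    rcases eq_or_lt_of_le hη0 with hzero | hpos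
    · -- η = 0 : both sides vanish
      have hlog0 : Real.log η = 0 := by rw [← hzero, Real.log_zero]
      have hRHS : ((η ^ (α * q) - 1) / (α * q * Real.log η)) ^ (1/q) = 0 := by
        rw [hlog0, mul_zero, div_zero, Real.zero_rpow (by positivity : 1/q ≠ 0)]
      have hor : |f' a| = 0 ∨ M' = 0 := by
        rw [hη] at hzero
        exact div_eq_zero_iff.mp hzero.symm
      -- f' vanishes on the open interval
      have hf'0 : ∀ x ∈ Set.Ioo a b, f' x = 0 := by
        intro x hx
        have hb0 : (0:ℝ) < b := lt_of_le_of_lt ha hab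
        set t := (b - x)/(b - a) with htdef
        have ht0 : 0 < t := by
          apply div_pos (by linarith [hx.2]) hL
        have ht1 : t < 1 := by
          rw [div_lt_one hL]; linarith [hx.1]
        have ht : t ∈ Set.Icc (0:ℝ) 1 := ⟨ht0.le, ht1.le⟩
        have ham : a ∈ Set.Icc (0:ℝ) (b/m) := by
          refine ⟨ha, ?_⟩
          rw [le_div_iff₀ hm0]; nlinarith [hx.1]
        have hbm : b/m ∈ Set.Icc (0:ℝ) (b/m) := ⟨by positivity, le_refl _⟩
        have hx_eq : t * a + m * (1 - t) * (b/m) = x := by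
          rw [htdef]; field_simp; ring
        have h := hconv a ham (b/m) hbm t ht
        rw [hx_eq] at h
        have htα0 : 0 < t ^ α := Real.rpow_pos_of_pos ht0 α
        have htα1 : t ^ α < 1 := Real.rpow_lt_one ht0.le ht1 hα0
        have hzero' : (|f' a| ^ q) ^ (t ^ α) * (B ^ q) ^ (m * (1 - t ^ α)) = 0 := by
          rcases hor with h0 | h0
          · rw [h0, Real.zero_rpow hq0.ne', Real.zero_rpow htα0.ne', zero_mul]
          · have hB0 : B = 0 := by
              by_contra hBne
              have : 0 < B := lt_of_le_of_ne hBnn (Ne.symm hBne)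
              exact absurd h0 (Real.rpow_pos_of_pos this m).ne'
            rw [hB0, Real.zero_rpow hq0.ne', Real.zero_rpow (by nlinarith : 0 < m * (1 - t^α)).ne',
              mul_zero]
        rw [hzero'] at h
        have habs : |f' x| = 0 := by
          by_contra hne
          have : 0 < |f' x| := lt_of_le_of_ne (abs_nonneg _) (Ne.symm hne)
          exact absurd h (Real.rpow_pos_of_pos this q).not_ge
        exact abs_eq_zero.mp habs
      -- f is constant on [a, b]
      have hcontf : ContinuousOn f (Set.Icc a b) := fun x hx =>
        (hderiv' x hx).continuousAt.continuousWithinAt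
      have hdiff : DifferentiableOn ℝ f (interior (Set.Icc a b)) := by
        rw [interior_Icc]
        exact fun x hx =>
          (hderiv' x (Set.Ioo_subset_Icc_self hx)).differentiableAt.differentiableWithinAt
      have hderiv0 : ∀ x ∈ interior (Set.Icc a b), deriv f x = 0 := by
        rw [interior_Icc]
        intro x hx
        rw [(hderiv' x (Set.Ioo_subset_Icc_self hx)).deriv]
        exact hf'0 x hx
      have hmono : MonotoneOn f (Set.Icc a b) :=
        monotoneOn_of_deriv_nonneg (convex_Icc a b) hcontf hdiff
          (fun x hx => le_of_eq (hderiv0 x hx).symm)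
      have hanti : AntitoneOn f (Set.Icc a b) :=
        antitoneOn_of_deriv_nonpos (convex_Icc a b) hcontf hdiff
          (fun x hx => le_of_eq (hderiv0 x hx))
      have hconst : ∀ x ∈ Set.Icc a b, f x = f a := by
        intro x hx
        have h1 := hmono (Set.left_mem_Icc.2 hab.le) hx hx.1
        have h2 := hanti (Set.left_mem_Icc.2 hab.le) hx hx.1
        linarith
      have hib : ∫ x in a..b, f x = (b - a) * f a := by
        rw [show (∫ x in a..b, f x) = ∫ _x in a..b, f a from
          intervalIntegral.integral_congr fun x hx => hconst x (by rwa [Set.uIcc_of_le hab.le] at hx)]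
        rw [intervalIntegral.integral_const, smul_eq_mul]
      have hLHS : |(f a + f b) / 2 - (1 / (b - a)) * ∫ x in a..b, f x| = 0 := by
        rw [hib, hconst b (Set.right_mem_Icc.2 hab.le)]
        rw [abs_eq_zero]
        field_simp
        ring
      rw [hLHS, hRHS, mul_zero]
    · -- 0 < η < 1
      have hM'ne : M' ≠ 0 := by
        intro h
        rw [hη, h, div_zero] at hpos
        exact lt_irrefl 0 hpos
      have hB0 : 0 < B := hBpos_of_ne hM'ne
      have hM'0 : 0 < M' := Real.rpow_pos_of_pos hB0 m
      have hfa : |f' a| = η * M' := by rw [hη]; field_simp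
      have hlog : Real.log η < 0 := Real.log_neg hpos hη1
      have hpt := aux_pointwise f' a b α m q η ha hab hm0 hm1 hα0 hα1 hq0 hconv hB0 hfa hη0
      obtain ⟨u, hudef⟩ : ∃ u, u = q * Real.log η := ⟨_, rfl⟩
      obtain ⟨v, hvdef⟩ : ∃ v, v = α * q * Real.log η := ⟨_, rfl⟩
      have hu : u < 0 := by rw [hudef]; exact mul_neg_of_pos_of_neg hq0 hlog
      have hv : v < 0 := by
        rw [hvdef]
        exact mul_neg_of_pos_of_neg (by positivity) hlog
      have huv : u ≤ v := by
        rw [hudef, hvdef]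
        nlinarith
      obtain ⟨S, hSdef⟩ : ∃ S, S = (Real.exp u - 1) / u := ⟨_, rfl⟩
      have hSnn : 0 ≤ S := by
        rw [hSdef]
        apply div_nonneg_iff.2
        refine Or.inr ⟨?_, hu.le⟩
        have : Real.exp u ≤ 1 := Real.exp_le_one_iff.2 hu.le
        linarith
      -- pointwise bounds
      have hbound : ∀ x ∈ Set.Ioc a b, |f' x| ≤ M' := by
        intro x hx
        refine aux_root (abs_nonneg _) hM'nn hq0 ?_
        refine (hpt x (Set.Ioc_subset_Icc_self hx)).trans ?_
        have hexp_nn : 0 ≤ q * (((b - x)/(b - a)) ^ α) := by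
          have : (0:ℝ) ≤ (b - x)/(b - a) := div_nonneg (by linarith [hx.2]) hL.le
          positivity
        calc η ^ (q * (((b - x)/(b - a)) ^ α)) * M' ^ q
            ≤ 1 * M' ^ q := by
              apply mul_le_mul_of_nonneg_right _ (Real.rpow_nonneg hM'nn q)
              exact Real.rpow_le_one hη0 hη1.le hexp_nn
          _ = M' ^ q := one_mul _
      obtain ⟨k, hkdef⟩ : ∃ k, k = q * Real.log η / (b - a) := ⟨_, rfl⟩
      have hkne : k ≠ 0 := by
        rw [hkdef]
        rw [← hudef]
        exact div_ne_zero hu.ne hL.ne'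
      have hpt2 : ∀ x ∈ Set.Ioc a b, |f' x| ^ q ≤ M' ^ q * Real.exp (k * (b - x)) := by
        intro x hx
        refine (hpt x (Set.Ioc_subset_Icc_self hx)).trans ?_
        rw [mul_comm (M' ^ q) _]
        apply mul_le_mul_of_nonneg_right _ (Real.rpow_nonneg hM'nn q)
        set t := (b - x)/(b - a) with htdef
        have ht0 : 0 ≤ t := div_nonneg (by linarith [hx.2]) hL.le
        have ht1 : t ≤ 1 := by rw [div_le_one hL]; linarith [hx.1]
        have httα : q * t ≤ q * t ^ α := by
          apply mul_le_mul_of_nonneg_left _ hq0.le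
          rcases eq_or_lt_of_le ht0 with h0 | h0
          · rw [← h0, Real.zero_rpow hα0.ne']
          · calc t = t ^ (1:ℝ) := (Real.rpow_one t).symm
              _ ≤ t ^ α := Real.rpow_le_rpow_of_exponent_ge h0 ht1 hα1
        calc η ^ (q * t ^ α) ≤ η ^ (q * t) :=
              Real.rpow_le_rpow_of_exponent_ge hpos hη1.le httα
          _ = Real.exp (k * (b - x)) := by
              rw [Real.rpow_def_of_pos hpos]
              congr 1
              rw [hkdef, htdef]
              field_simp
      -- the exponential integral
      have hexpint : ∫ x in a..b, Real.exp (k * (b - x)) = (Real.exp u - 1) / k := by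
        have hF : ∀ x ∈ Set.uIcc a b, HasDerivAt (fun y => -(Real.exp (k * (b - y)) / k))
            (Real.exp (k * (b - x))) x := by
          intro x _
          have h1 : HasDerivAt (fun y : ℝ => b - y) (-1) x := (hasDerivAt_id x).const_sub b
          have h2 : HasDerivAt (fun y : ℝ => k * (b - y)) (k * -1) x := h1.const_mul k
          have h3 := (h2.exp.div_const k).neg
          rw [mul_neg_one, mul_neg, neg_div, neg_neg, mul_div_assoc, div_self hkne, mul_one] at h3
          exact h3
        have hIint : IntervalIntegrable (fun x => Real.exp (k * (b - x)))
            MeasureTheory.volume a b := by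
          apply Continuous.intervalIntegrable
          fun_prop
        rw [intervalIntegral.integral_eq_sub_of_hasDerivAt hF hIint]
        rw [sub_self, mul_zero, Real.exp_zero]
        rw [show k * (b - a) = u from by rw [hkdef, hudef]; field_simp]
        field_simp
        ring
      have hSS : (Real.exp u - 1) / k = (b - a) * S := by
        rw [hSdef, hkdef, hudef]
        field_simp
      have hSint : ∫ x in Set.Ioc a b, |f' x| ^ q ≤ M' ^ q * ((b - a) * S) := by
        have hintq := aux_intq f' a b q (M' ^ q) hq0 hint
          (fun x hx => Real.rpow_le_rpow (abs_nonneg _) (hbound x hx) hq0.le)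
        have hGint : IntegrableOn (fun x => M' ^ q * Real.exp (k * (b - x)))
            (Set.Ioc a b) MeasureTheory.volume := by
          apply Continuous.integrableOn_Ioc
          fun_prop
        calc ∫ x in Set.Ioc a b, |f' x| ^ q
            ≤ ∫ x in Set.Ioc a b, M' ^ q * Real.exp (k * (b - x)) :=
              setIntegral_mono_on hintq hGint measurableSet_Ioc hpt2
          _ = M' ^ q * ∫ x in Set.Ioc a b, Real.exp (k * (b - x)) :=
              MeasureTheory.integral_const_mul _ _
          _ = M' ^ q * ((b - a) * S) := by
              rw [← intervalIntegral.integral_of_le hab.le, hexpint, hSS]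
      have hcore := aux_core f f' a b hab hderiv' hint p q hp hq hpq M' S hM'nn hSnn
        hbound hSint
      refine hcore.trans ?_
      have hC : (((1:ℝ)/2)^p/(p+1)) ^ (1/p) ≤ (2/((p+1)*(p+2))) ^ (1/p) :=
        Real.rpow_le_rpow (by positivity) (aux_const hp) (by positivity)
      have hD : S ^ (1/q) ≤ ((η ^ (α * q) - 1) / (α * q * Real.log η)) ^ (1/q) := by
        apply Real.rpow_le_rpow hSnn _ (by positivity)
        have hsec := aux_secant hu.ne hv.ne huv
        rw [hSdef]
        refine hsec.trans (le_of_eq ?_)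
        rw [Real.rpow_def_of_pos hpos]
        rw [hvdef]
        ring_nf
      calc (b - a) * M' * (((1:ℝ)/2)^p/(p+1)) ^ (1/p) * S ^ (1/q)
          ≤ (b - a) * M' * (2/((p+1)*(p+2))) ^ (1/p) *
            ((η ^ (α * q) - 1) / (α * q * Real.log η)) ^ (1/q) := by
            apply mul_le_mul (mul_le_mul_of_nonneg_left hC (by positivity)) hD
              (Real.rpow_nonneg hSnn _) (by positivity)
end

section
/- Let I ⊃ [0,∞) be an open interval and let f : I → (0,∞) be differentiable on I with f' integrable on (a,b), where 0 ≤ a < b < ∞. Suppose |f'|² is m-logarithmically convex on [0, b/m] for some m ∈ (0,1], and set η = |f'(a)| / |f'(b/m)|^m. Then: if η = 1, |(f(a)+f(b))/2 − (1/(b−a))·∫_a^b f(x) dx| ≤ (b−a)·|f'(b/m)|^m·√(1/6); and if η < 1, |(f(a)+f(b))/2 − (1/(b−a))·∫_a^b f(x) dx| ≤ (b−a)·|f'(b/m)|^m·√(1/6)·((η² − 1)/(2·ln η))^{1/2}. -/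
open MeasureTheory Real Set intervalIntegral


lemma cs_aux (a b : ℝ) (hab : a ≤ b) (g h : ℝ → ℝ)
    (hg2 : IntervalIntegrable (fun x => g x ^ 2) volume a b)
    (hh2 : IntervalIntegrable (fun x => h x ^ 2) volume a b)
    (hgh : IntervalIntegrable (fun x => g x * h x) volume a b) :
    ∫ x in a..b, g x * h x ≤
      Real.sqrt (∫ x in a..b, g x ^ 2) * Real.sqrt (∫ x in a..b, h x ^ 2) := by
  set A := ∫ x in a..b, g x ^ 2 with hA
  set Bq := ∫ x in a..b, h x ^ 2 with hB
  set C := ∫ x in a..b, g x * h x with hC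
  have hA0 : 0 ≤ A := intervalIntegral.integral_nonneg hab fun x _ => sq_nonneg _
  have key : ∀ l : ℝ, 0 ≤ Bq * (l * l) + (-2 * C) * l + A := by
    intro l
    have h0 : 0 ≤ ∫ x in a..b, (l * h x - g x) ^ 2 :=
      intervalIntegral.integral_nonneg hab fun x _ => sq_nonneg _
    have hexp : (fun x => (l * h x - g x) ^ 2)
        = fun x => (l ^ 2 * h x ^ 2 - 2 * l * (g x * h x)) + g x ^ 2 := by
      funext x; ring
    rw [hexp] at h0
    rw [intervalIntegral.integral_add ((hh2.const_mul _).sub (hgh.const_mul _)) hg2,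
      intervalIntegral.integral_sub (hh2.const_mul _) (hgh.const_mul _),
      intervalIntegral.integral_const_mul, intervalIntegral.integral_const_mul] at h0
    nlinarith [h0]
  have hd := discrim_le_zero key
  rw [discrim] at hd
  have hC2 : C ^ 2 ≤ A * Bq := by nlinarith
  calc C ≤ |C| := le_abs_self _
    _ = Real.sqrt (C ^ 2) := (Real.sqrt_sq_eq_abs C).symm
    _ ≤ Real.sqrt (A * Bq) := Real.sqrt_le_sqrt hC2
    _ = Real.sqrt A * Real.sqrt Bq := Real.sqrt_mul hA0 _

set_option maxHeartbeats 1600000 in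
theorem stmt5
    (I : Set ℝ) (hIopen : IsOpen I) (hIconn : Set.OrdConnected I)
    (hIci : Set.Ici (0:ℝ) ⊆ I)
    (f f' : ℝ → ℝ)
    (hfpos : ∀ x ∈ I, 0 < f x)
    (hderiv : ∀ x ∈ I, HasDerivAt f (f' x) x)
    (a b : ℝ) (ha : 0 ≤ a) (hab : a < b)
    (hint : IntervalIntegrable f' MeasureTheory.volume a b)
    (m : ℝ) (hm : m ∈ Set.Ioc (0:ℝ) 1)
    (hconv : ∀ x ∈ Set.Icc (0:ℝ) (b / m), ∀ y ∈ Set.Icc (0:ℝ) (b / m), ∀ t ∈ Set.Icc (0:ℝ) 1,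
      |f' (t * x + m * (1 - t) * y)| ^ 2 ≤ (|f' (x)| ^ 2) ^ t * (|f' (y)| ^ 2) ^ (m * (1 - t)))
    (η : ℝ) (hη : η = |f' a| / |f' (b / m)| ^ m) :
    (η = 1 → |(f a + f b) / 2 - (1 / (b - a)) * ∫ x in a..b, f x| ≤ (b - a) * |f' (b / m)| ^ m * Real.sqrt (1 / 6)) ∧
    (η < 1 → |(f a + f b) / 2 - (1 / (b - a)) * ∫ x in a..b, f x| ≤ (b - a) * |f' (b / m)| ^ m * Real.sqrt (1 / 6) *
      ((η ^ 2 - 1) / (2 * Real.log η)) ^ ((1:ℝ) / 2)) := by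
  obtain ⟨hm0, hm1⟩ := hm
  have hb0 : (0:ℝ) < b := lt_of_le_of_lt ha hab
  have hba : (0:ℝ) < b - a := sub_pos.mpr hab
  have hbm : b ≤ b / m := by
    rw [le_div_iff₀ hm0]; nlinarith
  have habm : a ≤ b / m := le_trans hab.le hbm
  have hbm0 : (0:ℝ) ≤ b / m := le_trans hb0.le hbm
  have hIcc : Set.Icc a b ⊆ I := fun x hx => hIci (le_trans ha hx.1)
  have huIcc : Set.uIcc a b = Set.Icc a b := Set.uIcc_of_le hab.le
  set c : ℝ := (a + b) / 2 with hc
  set A : ℝ := |f' a| with hA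
  set B : ℝ := |f' (b / m)| ^ m with hB
  -- the integration-by-parts identity
  have hfint : IntervalIntegrable f volume a b := by
    apply ContinuousOn.intervalIntegrable
    rw [huIcc]
    exact fun x hx => ((hderiv x (hIcc hx)).continuousAt).continuousWithinAt
  have hprod : IntervalIntegrable (fun x => (x - c) * f' x) volume a b := by
    apply IntervalIntegrable.continuousOn_mul hint
    exact (continuous_id.sub continuous_const).continuousOn
  have hid : (f a + f b) / 2 - (1 / (b - a)) * ∫ x in a..b, f x
      = (1 / (b - a)) * ∫ x in a..b, (x - c) * f' x := by
    have hparts := intervalIntegral.integral_mul_deriv_eq_deriv_mul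
      (u := fun x => x - c) (u' := fun _ => (1:ℝ)) (v := f) (v' := f')
      (fun x _ => (hasDerivAt_id x).sub_const c)
      (fun x hx => hderiv x (hIcc (huIcc ▸ hx)))
      intervalIntegrable_const hint
    have hone : ∫ x in a..b, (1:ℝ) * f x = ∫ x in a..b, f x := by
      simp
    rw [hparts, hone, hc]
    field_simp
    ring
  -- pointwise convexity bound, general form
  have hpt0 : ∀ x ∈ Set.Icc a b,
      |f' x| ^ 2 ≤ (A ^ 2) ^ ((b - x) / (b - a)) * (|f' (b / m)| ^ 2) ^ (m * (1 - (b - x) / (b - a))) := by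
    intro x hx
    have ht0 : 0 ≤ (b - x) / (b - a) := div_nonneg (by linarith [hx.2]) hba.le
    have ht1 : (b - x) / (b - a) ≤ 1 := by
      rw [div_le_one hba]; linarith [hx.1]
    have harg : (b - x) / (b - a) * a + m * (1 - (b - x) / (b - a)) * (b / m) = x := by
      field_simp
      ring
    have hcv := hconv a ⟨ha, habm⟩ (b / m) ⟨hbm0, le_refl _⟩ ((b - x) / (b - a)) ⟨ht0, ht1⟩
    rwa [harg] at hcv
  by_cases hdeg : A = 0 ∨ |f' (b / m)| = 0
  · -- degenerate case: η = 0 and f' vanishes on (a,b)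
    have hη0 : η = 0 := by
      rcases hdeg with h0 | h0
      · rw [hη, h0, zero_div]
      · rw [hη, show B = 0 by rw [hB, h0, Real.zero_rpow hm0.ne'], div_zero]
    have hf'0 : ∀ x ∈ Set.Ioo a b, f' x = 0 := by
      intro x hx
      have hcv := hpt0 x (Set.Ioo_subset_Icc_self hx)
      have ht0 : 0 < (b - x) / (b - a) := div_pos (by linarith [hx.2]) hba
      have ht1 : (b - x) / (b - a) < 1 := by
        rw [div_lt_one hba]; linarith [hx.1]
      have hrhs : (A ^ 2) ^ ((b - x) / (b - a))
          * (|f' (b / m)| ^ 2) ^ (m * (1 - (b - x) / (b - a))) = 0 := by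
        rcases hdeg with h0 | h0
        · rw [h0]
          rw [show ((0:ℝ) ^ 2 : ℝ) = 0 by norm_num, Real.zero_rpow ht0.ne', zero_mul]
        · rw [h0]
          rw [show ((0:ℝ) ^ 2 : ℝ) = 0 by norm_num,
            Real.zero_rpow (ne_of_gt (mul_pos hm0 (by linarith))), mul_zero]
      rw [hrhs] at hcv
      have h2 : |f' x| ^ 2 = 0 := le_antisymm hcv (by positivity)
      have := pow_eq_zero_iff (n := 2) (by norm_num) |>.mp h2
      exact abs_eq_zero.mp this
    have hzero : ∫ x in a..b, (x - c) * f' x = 0 := by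
      have hae : ∀ᵐ x ∂(volume : Measure ℝ), x ∈ Set.uIoc a b → (x - c) * f' x = (0:ℝ) := by
        filter_upwards [MeasureTheory.compl_mem_ae_iff.mpr (measure_singleton b)] with x hx hmem
        rw [Set.uIoc_of_le hab.le] at hmem
        have hxb : x ≠ b := by simpa using hx
        have : x ∈ Set.Ioo a b := ⟨hmem.1, lt_of_le_of_ne hmem.2 hxb⟩
        rw [hf'0 x this, mul_zero]
      rw [intervalIntegral.integral_congr_ae hae, intervalIntegral.integral_zero]
    have hlhs : |(f a + f b) / 2 - (1 / (b - a)) * ∫ x in a..b, f x| = 0 := by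
      rw [hid, hzero, mul_zero, abs_zero]
    constructor
    · intro h1; rw [hη0] at h1; norm_num at h1
    · intro _
      rw [hlhs, hη0]
      rw [Real.log_zero, mul_zero, div_zero, Real.zero_rpow (by norm_num), mul_zero]
  · -- nondegenerate case
    push_neg at hdeg
    have hApos : 0 < A := (abs_nonneg _).lt_of_ne' hdeg.1
    have hB0pos : 0 < |f' (b / m)| := (abs_nonneg _).lt_of_ne' hdeg.2
    have hBpos : 0 < B := Real.rpow_pos_of_pos hB0pos m
    have hηpos : 0 < η := by rw [hη]; exact div_pos hApos hBpos
    set k : ℝ := 2 * Real.log η / (b - a) with hk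
    -- pointwise bound in exponential form
    have hpt : ∀ x ∈ Set.Icc a b, |f' x| ^ 2 ≤ B ^ 2 * Real.exp (k * (b - x)) := by
      intro x hx
      have hcv := hpt0 x hx
      have hrw : (A ^ 2) ^ ((b - x) / (b - a))
          * (|f' (b / m)| ^ 2) ^ (m * (1 - (b - x) / (b - a)))
          = B ^ 2 * Real.exp (k * (b - x)) := by
        have e1 : (A ^ 2 : ℝ) ^ ((b - x) / (b - a))
            = Real.exp ((2 * Real.log A) * ((b - x) / (b - a))) := by
          rw [Real.rpow_def_of_pos (by positivity), Real.log_pow]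
          norm_num
        have e2 : (|f' (b / m)| ^ 2 : ℝ) ^ (m * (1 - (b - x) / (b - a)))
            = Real.exp ((2 * Real.log |f' (b / m)|) * (m * (1 - (b - x) / (b - a)))) := by
          rw [Real.rpow_def_of_pos (by positivity), Real.log_pow]
          norm_num
        have e3 : B ^ 2 = Real.exp (2 * m * Real.log |f' (b / m)|) := by
          rw [hB, Real.rpow_def_of_pos hB0pos, pow_two, ← Real.exp_add]
          congr 1
          ring
        have e4 : Real.log η = Real.log A - m * Real.log |f' (b / m)| := by
          rw [hη, Real.log_div hApos.ne' hBpos.ne', hB, Real.log_rpow hB0pos]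
        rw [e1, e2, e3, ← Real.exp_add, ← Real.exp_add]
        congr 1
        rw [hk, e4]
        field_simp
        ring
      rw [hrw] at hcv
      exact hcv
    -- integrability facts
    have hDcont : Continuous fun x : ℝ => B ^ 2 * Real.exp (k * (b - x)) :=
      continuous_const.mul ((continuous_const.mul (continuous_const.sub continuous_id)).rexp)
    have hDint : IntervalIntegrable (fun x => B ^ 2 * Real.exp (k * (b - x))) volume a b :=
      hDcont.intervalIntegrable a b
    have hh2 : IntervalIntegrable (fun x => |f' x| ^ 2) volume a b := by
      rw [intervalIntegrable_iff_integrableOn_Ioc_of_le hab.le]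
      apply Integrable.mono' (g := fun x => B ^ 2 * Real.exp (k * (b - x))) hDint.1
      · have hmeas := hint.1.aestronglyMeasurable
        have hmm : AEStronglyMeasurable (fun x => f' x * f' x)
            (volume.restrict (Set.Ioc a b)) := hmeas.mul hmeas
        have heq : (fun x => |f' x| ^ 2) = fun x => f' x * f' x := by
          funext x; rw [sq_abs, pow_two]
        rw [heq]; exact hmm
      · rw [ae_restrict_iff' measurableSet_Ioc]
        exact ae_of_all _ fun x hx => by
          rw [Real.norm_eq_abs, abs_of_nonneg (by positivity)]
          exact hpt x (Set.Ioc_subset_Icc_self hx)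
    have hg2 : IntervalIntegrable (fun x => |x - c| ^ 2) volume a b :=
      (((continuous_id.sub continuous_const).abs).pow 2).intervalIntegrable a b
    have hgh : IntervalIntegrable (fun x => |x - c| * |f' x|) volume a b := by
      have h1 := hprod.abs
      have heq : (fun x => |x - c| * |f' x|) = fun x => |(x - c) * f' x| := by
        funext x; rw [abs_mul]
      rw [heq]; exact h1
    -- the square integral
    have hsq : ∫ x in a..b, |x - c| ^ 2 = (b - a) ^ 3 / 12 := by
      rw [intervalIntegral.integral_congr (g := fun x => (x - c) ^ 2)
        (fun x _ => sq_abs (x - c))]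
      have hF : ∀ x : ℝ, HasDerivAt (fun y => (y - c) ^ 3 / 3) ((x - c) ^ 2) x := by
        intro x
        have h1 : HasDerivAt (fun y => (y - c) ^ 3 / 3) (↑3 * (x - c) ^ (3 - 1) * 1 / 3) x :=
          (((hasDerivAt_id x).sub_const c).pow 3).div_const 3
        convert h1 using 1
        ring
      rw [intervalIntegral.integral_eq_sub_of_hasDerivAt (fun x _ => hF x)
        (((continuous_id.sub continuous_const).pow 2).intervalIntegrable a b)]
      rw [hc]; ring
    -- main estimate
    have main : |(f a + f b) / 2 - (1 / (b - a)) * ∫ x in a..b, f x|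
        ≤ (1 / (b - a)) * (Real.sqrt ((b - a) ^ 3 / 12)
          * Real.sqrt (∫ x in a..b, B ^ 2 * Real.exp (k * (b - x)))) := by
      rw [hid, abs_mul, abs_of_pos (by positivity : (0:ℝ) < 1 / (b - a))]
      apply mul_le_mul_of_nonneg_left _ (by positivity)
      calc |∫ x in a..b, (x - c) * f' x|
          ≤ ∫ x in a..b, |(x - c) * f' x| :=
            intervalIntegral.abs_integral_le_integral_abs hab.le
        _ = ∫ x in a..b, |x - c| * |f' x| :=
            intervalIntegral.integral_congr (fun x _ => abs_mul _ _)
        _ ≤ Real.sqrt (∫ x in a..b, |x - c| ^ 2) * Real.sqrt (∫ x in a..b, |f' x| ^ 2) :=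
            cs_aux a b hab.le _ _ hg2 hh2 hgh
        _ ≤ Real.sqrt ((b - a) ^ 3 / 12)
            * Real.sqrt (∫ x in a..b, B ^ 2 * Real.exp (k * (b - x))) := by
            rw [hsq]
            apply mul_le_mul_of_nonneg_left _ (Real.sqrt_nonneg _)
            exact Real.sqrt_le_sqrt (intervalIntegral.integral_mono_on hab.le hh2 hDint hpt)
    constructor
    · -- η = 1
      intro h1
      have hk0 : k = 0 := by rw [hk, h1, Real.log_one]; simp
      have hDval : ∫ x in a..b, B ^ 2 * Real.exp (k * (b - x)) = B ^ 2 * (b - a) := by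
        rw [hk0]; simp [mul_comm]
      refine le_trans main ?_
      rw [hDval]
      have e1 : Real.sqrt ((b - a) ^ 3 / 12) * Real.sqrt (B ^ 2 * (b - a))
          = Real.sqrt ((b - a) ^ 4 * B ^ 2 / 12) := by
        rw [← Real.sqrt_mul (by positivity)]
        congr 1
        ring
      have e2 : (b - a) * B * Real.sqrt (1 / 6)
          = (1 / (b - a)) * Real.sqrt ((b - a) ^ 4 * B ^ 2 / 6) := by
        rw [show (b - a) ^ 4 * B ^ 2 / 6 = ((b - a) ^ 2 * B) ^ 2 * (1 / 6) by ring,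
          Real.sqrt_mul (sq_nonneg _), Real.sqrt_sq (mul_nonneg (sq_nonneg _) hBpos.le)]
        field_simp
      rw [e1, e2]
      apply mul_le_mul_of_nonneg_left _ (by positivity)
      apply Real.sqrt_le_sqrt
      have hX : 0 ≤ (b - a) ^ 4 * B ^ 2 := by positivity
      linarith
    · -- η < 1
      intro hlt
      have hlog : Real.log η < 0 := Real.log_neg hηpos hlt
      have hkneg : k < 0 := div_neg_of_neg_of_pos (by linarith) hba
      set K : ℝ := (η ^ 2 - 1) / (2 * Real.log η) with hK
      have hKpos : 0 < K := by
        rw [hK, div_pos_iff]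
        right
        constructor <;> nlinarith
      have hJ : ∫ x in a..b, Real.exp (k * (b - x)) = (b - a) * K := by
        have hF : ∀ x : ℝ, HasDerivAt (fun y => -(Real.exp (k * (b - y)) / k))
            (Real.exp (k * (b - x))) x := by
          intro x
          have h1 : HasDerivAt (fun y : ℝ => k * (b - y)) (-k) x := by
            simpa using ((hasDerivAt_id x).const_sub b).const_mul k
          have h2 : HasDerivAt (fun y => -(Real.exp (k * (b - y)) / k))
              (-(Real.exp (k * (b - x)) * -k / k)) x := ((h1.exp).div_const k).neg
          convert h2 using 1
          rw [mul_neg, neg_div, neg_neg, mul_div_assoc, div_self hkneg.ne, mul_one]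
        rw [intervalIntegral.integral_eq_sub_of_hasDerivAt (fun x _ => hF x)
          ((continuous_const.mul (continuous_const.sub continuous_id)).rexp.intervalIntegrable a b)]
        have hexp : Real.exp (k * (b - a)) = η ^ 2 := by
          rw [show k * (b - a) = Real.log η + Real.log η by
              rw [hk, div_mul_cancel₀ _ hba.ne']; ring,
            Real.exp_add, Real.exp_log hηpos]
          ring
        simp only [sub_self, mul_zero, Real.exp_zero]
        rw [hexp, hK, hk]
        field_simp
        ring
      have hDval : ∫ x in a..b, B ^ 2 * Real.exp (k * (b - x)) = B ^ 2 * ((b - a) * K) := by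
        rw [intervalIntegral.integral_const_mul, hJ]
      refine le_trans main ?_
      rw [hDval]
      have hrpow : K ^ ((1:ℝ) / 2) = Real.sqrt K := (Real.sqrt_eq_rpow K).symm
      have e1 : Real.sqrt ((b - a) ^ 3 / 12) * Real.sqrt (B ^ 2 * ((b - a) * K))
          = Real.sqrt ((b - a) ^ 4 * B ^ 2 * K / 12) := by
        rw [← Real.sqrt_mul (by positivity)]
        congr 1
        ring
      have e2 : (b - a) * B * Real.sqrt (1 / 6) * Real.sqrt K
          = (1 / (b - a)) * Real.sqrt ((b - a) ^ 4 * B ^ 2 * K / 6) := by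
        rw [show (b - a) ^ 4 * B ^ 2 * K / 6 = ((b - a) ^ 2 * B) ^ 2 * ((1 / 6) * K) by ring,
          Real.sqrt_mul (sq_nonneg _), Real.sqrt_sq (mul_nonneg (sq_nonneg _) hBpos.le),
          Real.sqrt_mul (by norm_num : (0:ℝ) ≤ 1 / 6)]
        field_simp
      rw [hrpow, e1, e2]
      apply mul_le_mul_of_nonneg_left _ (by positivity)
      apply Real.sqrt_le_sqrt
      have hX : 0 ≤ (b - a) ^ 4 * B ^ 2 * K := by positivity
      linarith
end

section
/- Let I ⊃ [0,∞) be an open interval and let f : I → (0,∞) be differentiable on I with f' integrable on (a,b), where 0 ≤ a < b < ∞. Suppose |f'|^q is α-logarithmically convex on [0, b] for some α ∈ (0,1] and p, q > 1 with 1/p + 1/q = 1, and set η = |f'(a)| / |f'(b)|. Then: if η = 1, |(f(a)+f(b))/2 − (1/(b−a))·∫_a^b f(x) dx| ≤ (b−a)·|f'(b)|·(2/((p+1)(p+2)))^{1/p}; and if η < 1, |(f(a)+f(b))/2 − (1/(b−a))·∫_a^b f(x) dx| ≤ (b−a)·|f'(b)|·(2/((p+1)(p+2)))^{1/p}·((η^{αq}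 − 1)/(αq·ln η))^{1/q}. -/
open MeasureTheory Real Set intervalIntegral



lemma aux_zero (I : Set ℝ) (hIci : Set.Ici (0:ℝ) ⊆ I)
    (f f' : ℝ → ℝ) (hderiv : ∀ x ∈ I, HasDerivAt f (f' x) x)
    (a b : ℝ) (ha : 0 ≤ a) (hab : a < b)
    (hint : IntervalIntegrable f' MeasureTheory.volume a b)
    (h0 : ∀ x ∈ Set.Ioo a b, f' x = 0) :
    (f a + f b) / 2 - (1 / (b - a)) * ∫ x in a..b, f x = 0 := by
  have hIcc : Set.Icc a b ⊆ I := fun x hx => hIci (le_trans ha hx.1)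
  have hconst : ∀ x ∈ Set.Icc a b, f x = f a := by
    intro x hx
    have hsub : Set.uIcc a x ⊆ Set.uIcc a b := by
      rw [uIcc_of_le hx.1, uIcc_of_le hab.le]
      exact Icc_subset_Icc le_rfl hx.2
    have hftc : ∫ t in a..x, f' t = f x - f a :=
      intervalIntegral.integral_eq_sub_of_hasDerivAt
        (fun t ht => hderiv t (hIcc ((uIcc_of_le hab.le ▸ hsub) ht)))
        (hint.mono_set hsub)
    have hzero : ∫ t in a..x, f' t = 0 := by
      have hae : ∀ᵐ (t : ℝ), t ≠ b := by
        rw [ae_iff]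
        simp only [not_not, setOf_eq_eq_singleton]
        exact measure_singleton b
      rw [intervalIntegral.integral_congr_ae (g := fun _ => (0:ℝ)) ?_]
      · simp
      · filter_upwards [hae] with t htb ht
        rw [uIoc_of_le hx.1] at ht
        refine h0 t ⟨ht.1, lt_of_le_of_ne (le_trans ht.2 hx.2) htb⟩
    rw [hzero] at hftc
    linarith
  have hconstint : ∫ x in a..b, f x = (b - a) * f a := by
    rw [intervalIntegral.integral_congr (g := fun _ => f a)
      (by rw [uIcc_of_le hab.le]; exact fun x hx => hconst x hx)]
    simp [smul_eq_mul, mul_comm]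
  rw [hconstint, hconst b ⟨hab.le, le_rfl⟩]
  have hba : b - a ≠ 0 := sub_ne_zero.mpr hab.ne'
  field_simp
  ring


lemma aux_main (I : Set ℝ) (hIci : Set.Ici (0:ℝ) ⊆ I)
    (f f' : ℝ → ℝ) (hderiv : ∀ x ∈ I, HasDerivAt f (f' x) x)
    (a b : ℝ) (ha : 0 ≤ a) (hab : a < b)
    (hint : IntervalIntegrable f' MeasureTheory.volume a b)
    (p q : ℝ) (hp : 1 < p) (hq : 1 < q) (hpq : 1 / p + 1 / q = 1)
    (c : ℝ) (hc : c ≤ 0)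
    (hptw : ∀ x ∈ Set.Icc a b, |f' x| ^ q ≤ |f' b| ^ q * Real.exp (c * ((b - x) / (b - a)))) :
    |(f a + f b) / 2 - (1 / (b - a)) * ∫ x in a..b, f x| ≤
      (b - a) * |f' b| * (2 / ((p + 1) * (p + 2))) ^ (1 / p) *
        (∫ t in (0:ℝ)..1, Real.exp (c * t)) ^ (1 / q) := by
  have hd : (0:ℝ) < b - a := by linarith
  have hp0 : (0:ℝ) < p := by linarith
  have hq0 : (0:ℝ) < q := by linarith
  have hIcc : Set.Icc a b ⊆ I := fun x hx => hIci (le_trans ha hx.1)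
  have hu : Set.uIcc a b = Set.Icc a b := uIcc_of_le hab.le
  set J := ∫ t in (0:ℝ)..1, Real.exp (c * t) with hJdef
  have hJnonneg : 0 ≤ J :=
    intervalIntegral.integral_nonneg (by norm_num) (fun t _ => (Real.exp_pos _).le)
  -- pointwise bound |f' x| ≤ |f' b| on [a,b]
  have hB : ∀ x ∈ Set.Icc a b, |f' x| ≤ |f' b| := by
    intro x hx
    by_contra hlt
    push_neg at hlt
    have h1 := hptw x hx
    have hexp : Real.exp (c * ((b - x) / (b - a))) ≤ 1 := by
      rw [Real.exp_le_one_iff]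
      exact mul_nonpos_of_nonpos_of_nonneg hc (div_nonneg (by linarith [hx.2]) hd.le)
    have h2 : |f' x| ^ q ≤ |f' b| ^ q := by
      refine h1.trans ?_
      nlinarith [Real.rpow_nonneg (abs_nonneg (f' b)) q]
    have h3 : |f' b| ^ q < |f' x| ^ q := Real.rpow_lt_rpow (abs_nonneg _) hlt hq0
    linarith
  -- measurability of f' on (a,b]
  have hmeas : AEStronglyMeasurable f' (volume.restrict (Set.Ioc a b)) := by
    refine (measurable_deriv f).aestronglyMeasurable.congr ?_
    refine (ae_restrict_iff' measurableSet_Ioc).2 (Filter.Eventually.of_forall fun x hx => ?_)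
    exact (hderiv x (hIcc (Set.Ioc_subset_Icc_self hx))).deriv
  -- integrability of f
  have hfint : IntervalIntegrable f volume a b := by
    apply ContinuousOn.intervalIntegrable
    exact fun x hx => ((hderiv x (hIcc (hu ▸ hx))).continuousAt).continuousWithinAt
  -- integration by parts identity
  have hparts := intervalIntegral.integral_mul_deriv_eq_deriv_mul
    (u := fun x => x - (a + b) / 2) (u' := fun _ => (1:ℝ)) (v := f) (v' := f')
    (fun x _ => (hasDerivAt_id x).sub_const _)
    (fun x hx => hderiv x (hIcc (hu ▸ hx)))
    intervalIntegrable_const hint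
  have key : (f a + f b) / 2 - (1 / (b - a)) * ∫ x in a..b, f x
      = (1 / (b - a)) * ∫ x in a..b, (x - (a + b) / 2) * f' x := by
    rw [hparts]
    simp only [one_mul]
    have h1 : ∫ x in a..b, (1:ℝ) * f x = ∫ x in a..b, f x := by simp
    field_simp
    ring
  -- Holder setup
  haveI : IsFiniteMeasure (volume.restrict (Set.Ioc a b)) :=
    ⟨by rw [Measure.restrict_apply_univ]; exact measure_Ioc_lt_top⟩
  have hpq' : Real.HolderConjugate p q := Real.holderConjugate_iff.mpr ⟨hp, by simpa [one_div] using hpq⟩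
  have hFcont : Continuous (fun x : ℝ => |x - (a + b) / 2|) :=
    (continuous_id.sub continuous_const).abs
  have hFmem : MemLp (fun x : ℝ => |x - (a + b) / 2|) (ENNReal.ofReal p)
      (volume.restrict (Set.Ioc a b)) := by
    refine (memLp_top_of_bound hFcont.aestronglyMeasurable (b - a) ?_).mono_exponent le_top
    refine (ae_restrict_iff' measurableSet_Ioc).2 (Filter.Eventually.of_forall fun x hx => ?_)
    rw [Real.norm_eq_abs, abs_abs, abs_le]
    constructor <;> [linarith [hx.1.le, hx.2]; linarith [hx.1.le, hx.2]]
  have hGaesm : AEStronglyMeasurable (fun x => |f' x|) (volume.restrict (Set.Ioc a b)) :=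
    hmeas.norm.congr (Filter.Eventually.of_forall fun x => Real.norm_eq_abs _)
  have hGmem : MemLp (fun x => |f' x|) (ENNReal.ofReal q) (volume.restrict (Set.Ioc a b)) := by
    refine (memLp_top_of_bound hGaesm |f' b| ?_).mono_exponent le_top
    refine (ae_restrict_iff' measurableSet_Ioc).2 (Filter.Eventually.of_forall fun x hx => ?_)
    rw [Real.norm_eq_abs, abs_abs]
    exact hB x (Set.Ioc_subset_Icc_self hx)
  have hHolder := MeasureTheory.integral_mul_le_Lp_mul_Lq_of_nonneg hpq'
    (Filter.Eventually.of_forall fun x => abs_nonneg _)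
    (Filter.Eventually.of_forall fun x => abs_nonneg _) hFmem hGmem
  -- the |x - m|^p integral
  have hpow_cont : Continuous (fun x : ℝ => |x - (a + b) / 2| ^ p) :=
    hFcont.rpow_const (fun x => Or.inr hp0.le)
  have hbern : p + 2 ≤ 2 ^ (p + 1) := by
    have := one_add_mul_self_le_rpow_one_add (by norm_num : (-1:ℝ) ≤ 1)
      (by linarith : (1:ℝ) ≤ p + 1)
    norm_num at this
    linarith
  have h2p : (0:ℝ) < 2 ^ (p + 1) := Real.rpow_pos_of_pos two_pos _
  have hIp : (∫ x in Set.Ioc a b, |x - (a + b) / 2| ^ p)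
      ≤ (b - a) ^ (p + 1) * (2 / ((p + 1) * (p + 2))) := by
    rw [← intervalIntegral.integral_of_le hab.le]
    have ham : a ≤ (a + b) / 2 := by linarith
    have hmb : (a + b) / 2 ≤ b := by linarith
    have h1 : ∫ x in a..((a + b) / 2), |x - (a + b) / 2| ^ p
        = ((b - a) / 2) ^ (p + 1) / (p + 1) := by
      rw [intervalIntegral.integral_congr (g := fun x => ((a + b) / 2 - x) ^ p) ?_]
      · rw [intervalIntegral.integral_comp_sub_left (fun u => u ^ p) ((a + b) / 2)]
        rw [show (a + b) / 2 - (a + b) / 2 = (0:ℝ) by ring,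
          show (a + b) / 2 - a = (b - a) / 2 by ring]
        rw [integral_rpow (Or.inl (by linarith : (-1:ℝ) < p))]
        rw [Real.zero_rpow (by linarith : p + 1 ≠ 0)]
        ring
      · intro x hx
        rw [uIcc_of_le ham] at hx
        show |x - (a + b) / 2| ^ p = ((a + b) / 2 - x) ^ p
        rw [abs_of_nonpos (by linarith [hx.2] : x - (a + b) / 2 ≤ 0), neg_sub]
    have h2 : ∫ x in ((a + b) / 2)..b, |x - (a + b) / 2| ^ p
        = ((b - a) / 2) ^ (p + 1) / (p + 1) := by
      rw [intervalIntegral.integral_congr (g := fun x => (x - (a + b) / 2) ^ p) ?_]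
      · rw [intervalIntegral.integral_comp_sub_right (fun u => u ^ p) ((a + b) / 2)]
        rw [show (a + b) / 2 - (a + b) / 2 = (0:ℝ) by ring,
          show b - (a + b) / 2 = (b - a) / 2 by ring]
        rw [integral_rpow (Or.inl (by linarith : (-1:ℝ) < p))]
        rw [Real.zero_rpow (by linarith : p + 1 ≠ 0)]
        ring
      · intro x hx
        rw [uIcc_of_le hmb] at hx
        show |x - (a + b) / 2| ^ p = (x - (a + b) / 2) ^ p
        rw [abs_of_nonneg (by linarith [hx.1] : (0:ℝ) ≤ x - (a + b) / 2)]
    rw [← intervalIntegral.integral_add_adjacent_intervals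
      (hpow_cont.intervalIntegrable a ((a + b) / 2)) (hpow_cont.intervalIntegrable _ b),
      h1, h2]
    have hhalf : ((b - a) / 2) ^ (p + 1) = (b - a) ^ (p + 1) / 2 ^ (p + 1) :=
      Real.div_rpow hd.le (by norm_num : (0:ℝ) ≤ 2) (p + 1)
    rw [hhalf]
    have hba : (0:ℝ) ≤ (b - a) ^ (p + 1) := Real.rpow_nonneg hd.le _
    have hp1 : (0:ℝ) < p + 1 := by linarith
    have hp2 : (0:ℝ) < p + 2 := by linarith
    have e : ∀ T u v : ℝ, T / u / v + T / u / v = 2 * T / (u * v) := fun T u v => by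
      ring
    have e2 : ∀ T w : ℝ, T * (2 / w) = (T * 2) / w := fun T w => by ring
    rw [e ((b - a) ^ (p + 1)) (2 ^ (p + 1)) (p + 1), e2]
    rw [div_le_div_iff₀ (by positivity) (by positivity)]
    nlinarith [mul_nonneg (mul_nonneg hba hp1.le) (sub_nonneg.2 hbern)]
  -- the |f'|^q integral
  have hGq_aesm : AEStronglyMeasurable (fun x => |f' x| ^ q) (volume.restrict (Set.Ioc a b)) :=
    (hGaesm.aemeasurable.pow aemeasurable_const).aestronglyMeasurable
  have hIqInt : IntervalIntegrable (fun x => |f' x| ^ q) volume a b := by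
    rw [intervalIntegrable_iff_integrableOn_Ioc_of_le hab.le]
    refine Integrable.mono' (integrable_const (|f' b| ^ q)) hGq_aesm ?_
    refine (ae_restrict_iff' measurableSet_Ioc).2 (Filter.Eventually.of_forall fun x hx => ?_)
    rw [Real.norm_eq_abs, abs_of_nonneg (Real.rpow_nonneg (abs_nonneg _) _)]
    exact Real.rpow_le_rpow (abs_nonneg _) (hB x (Set.Ioc_subset_Icc_self hx)) hq0.le
  have hexp_cont : Continuous (fun x : ℝ => Real.exp (c * ((b - x) / (b - a)))) :=
    (Continuous.mul continuous_const ((continuous_const.sub continuous_id).div_const _)).rexp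
  have hexpid : ∫ x in a..b, Real.exp (c * ((b - x) / (b - a))) = (b - a) * J := by
    by_cases hc0 : c = 0
    · subst hc0
      rw [hJdef]
      simp [intervalIntegral.integral_const, smul_eq_mul]
    · have hanti : ∀ x ∈ Set.uIcc a b,
          HasDerivAt (fun y => -((b - a) / c) * Real.exp (c * ((b - y) / (b - a))))
            (Real.exp (c * ((b - x) / (b - a)))) x := by
        intro x _
        have h1 : HasDerivAt (fun y : ℝ => c * ((b - y) / (b - a))) (c * (-1 / (b - a))) x :=
          (((hasDerivAt_id x).const_sub b).div_const (b - a)).const_mul c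
        have h2 := (h1.exp).const_mul (-((b - a) / c))
        refine h2.congr_deriv ?_
        field_simp [hc0, hd.ne']
      rw [intervalIntegral.integral_eq_sub_of_hasDerivAt hanti
        (hexp_cont.intervalIntegrable a b)]
      have hJval : J = (Real.exp c - 1) / c := by
        rw [hJdef, intervalIntegral.integral_comp_mul_left Real.exp hc0]
        simp only [mul_zero, mul_one, integral_exp, Real.exp_zero, smul_eq_mul]
        field_simp
      rw [hJval, sub_self, zero_div, mul_zero, Real.exp_zero, div_self hd.ne', mul_one]
      field_simp
      ring
  have hIq : (∫ x in Set.Ioc a b, |f' x| ^ q) ≤ |f' b| ^ q * ((b - a) * J) := by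
    rw [← intervalIntegral.integral_of_le hab.le]
    have step1 : ∫ x in a..b, |f' x| ^ q
        ≤ ∫ x in a..b, |f' b| ^ q * Real.exp (c * ((b - x) / (b - a))) :=
      intervalIntegral.integral_mono_on hab.le hIqInt
        ((continuous_const.mul hexp_cont).intervalIntegrable a b) hptw
    refine step1.trans (le_of_eq ?_)
    rw [intervalIntegral.integral_const_mul, hexpid]
  -- final assembly
  have hC2 : (0:ℝ) < 2 / ((p + 1) * (p + 2)) := by positivity
  have e3 : ((b - a) ^ (p + 1) * (2 / ((p + 1) * (p + 2)))) ^ (1 / p)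
      = (b - a) * ((b - a) ^ (1 / p) * (2 / ((p + 1) * (p + 2))) ^ (1 / p)) := by
    rw [Real.mul_rpow (Real.rpow_nonneg hd.le _) hC2.le, ← Real.rpow_mul hd.le,
      show (p + 1) * (1 / p) = 1 + 1 / p by
        rw [mul_one_div, add_div, div_self hp0.ne'],
      Real.rpow_add hd, Real.rpow_one, mul_assoc]
  have e4 : (|f' b| ^ q * ((b - a) * J)) ^ (1 / q)
      = |f' b| * ((b - a) ^ (1 / q) * J ^ (1 / q)) := by
    rw [Real.mul_rpow (Real.rpow_nonneg (abs_nonneg _) _) (by positivity),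
      Real.mul_rpow hd.le hJnonneg, ← Real.rpow_mul (abs_nonneg _),
      mul_one_div_cancel hq0.ne', Real.rpow_one]
  have e5 : (b - a) ^ (1 / p) * (b - a) ^ (1 / q) = b - a := by
    rw [← Real.rpow_add hd, hpq, Real.rpow_one]
  have hbig : ((b - a) ^ (p + 1) * (2 / ((p + 1) * (p + 2)))) ^ (1 / p)
        * ((|f' b| ^ q * ((b - a) * J)) ^ (1 / q))
      = (b - a) * ((b - a) * (|f' b| * ((2 / ((p + 1) * (p + 2))) ^ (1 / p) * J ^ (1 / q)))) := by
    rw [e3, e4]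
    calc (b - a) * ((b - a) ^ (1 / p) * (2 / ((p + 1) * (p + 2))) ^ (1 / p))
          * (|f' b| * ((b - a) ^ (1 / q) * J ^ (1 / q)))
        = ((b - a) ^ (1 / p) * (b - a) ^ (1 / q)) * ((b - a)
            * (|f' b| * ((2 / ((p + 1) * (p + 2))) ^ (1 / p) * J ^ (1 / q)))) := by ring
      _ = (b - a) * ((b - a) * (|f' b| * ((2 / ((p + 1) * (p + 2))) ^ (1 / p)
            * J ^ (1 / q)))) := by rw [e5]
  have hd1 : (0:ℝ) < 1 / (b - a) := by positivity
  have hIq0 : (0:ℝ) ≤ ∫ x in Set.Ioc a b, |f' x| ^ q :=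
    MeasureTheory.integral_nonneg fun x => Real.rpow_nonneg (abs_nonneg _) _
  have hIp0 : (0:ℝ) ≤ ∫ x in Set.Ioc a b, |x - (a + b) / 2| ^ p :=
    MeasureTheory.integral_nonneg fun x => Real.rpow_nonneg (abs_nonneg _) _
  calc |(f a + f b) / 2 - (1 / (b - a)) * ∫ x in a..b, f x|
      = (1 / (b - a)) * |∫ x in a..b, (x - (a + b) / 2) * f' x| := by
        rw [key, abs_mul, abs_of_pos hd1]
    _ ≤ (1 / (b - a)) * ∫ x in Set.Ioc a b, |x - (a + b) / 2| * |f' x| := by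
        refine mul_le_mul_of_nonneg_left ?_ hd1.le
        rw [← intervalIntegral.integral_of_le hab.le]
        refine (intervalIntegral.abs_integral_le_integral_abs hab.le).trans (le_of_eq ?_)
        simp only [abs_mul]
    _ ≤ (1 / (b - a)) * ((∫ x in Set.Ioc a b, |x - (a + b) / 2| ^ p) ^ (1 / p)
          * (∫ x in Set.Ioc a b, |f' x| ^ q) ^ (1 / q)) :=
        mul_le_mul_of_nonneg_left hHolder hd1.le
    _ ≤ (1 / (b - a)) * (((b - a) ^ (p + 1) * (2 / ((p + 1) * (p + 2)))) ^ (1 / p)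
          * ((|f' b| ^ q * ((b - a) * J)) ^ (1 / q))) := by
        refine mul_le_mul_of_nonneg_left ?_ hd1.le
        exact mul_le_mul (Real.rpow_le_rpow hIp0 hIp (by positivity))
          (Real.rpow_le_rpow hIq0 hIq (by positivity))
          (Real.rpow_nonneg hIq0 _) (Real.rpow_nonneg (by positivity) _)
    _ = (b - a) * |f' b| * (2 / ((p + 1) * (p + 2))) ^ (1 / p) * J ^ (1 / q) := by
        rw [hbig, show (1 / (b - a)) * ((b - a) * ((b - a) * (|f' b|
            * ((2 / ((p + 1) * (p + 2))) ^ (1 / p) * J ^ (1 / q)))))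
          = ((1 / (b - a)) * (b - a)) * ((b - a) * (|f' b|
            * ((2 / ((p + 1) * (p + 2))) ^ (1 / p) * J ^ (1 / q)))) from by ring,
          one_div_mul_cancel hd.ne', one_mul]
        ring


theorem stmt6
    (I : Set ℝ) (hIopen : IsOpen I) (hIconn : Set.OrdConnected I)
    (hIci : Set.Ici (0:ℝ) ⊆ I)
    (f f' : ℝ → ℝ)
    (hfpos : ∀ x ∈ I, 0 < f x)
    (hderiv : ∀ x ∈ I, HasDerivAt f (f' x) x)
    (a b : ℝ) (ha : 0 ≤ a) (hab : a < b)
    (hint : IntervalIntegrable f' MeasureTheory.volume a b)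
    (α : ℝ) (hα : α ∈ Set.Ioc (0:ℝ) 1)
    (p q : ℝ) (hp : 1 < p) (hq : 1 < q) (hpq : 1 / p + 1 / q = 1)
    (hconv : ∀ x ∈ Set.Icc (0:ℝ) (b), ∀ y ∈ Set.Icc (0:ℝ) (b), ∀ t ∈ Set.Icc (0:ℝ) 1,
      |f' (t * x + (1 - t) * y)| ^ q ≤ (|f' (x)| ^ q) ^ (t ^ α) * (|f' (y)| ^ q) ^ (1 - t ^ α))
    (η : ℝ) (hη : η = |f' a| / |f' b|) :
    (η = 1 → |(f a + f b) / 2 - (1 / (b - a)) * ∫ x in a..b, f x| ≤ (b - a) * |f' b| * (2 / ((p + 1) * (p + 2))) ^ (1 / p)) ∧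
    (η < 1 → |(f a + f b) / 2 - (1 / (b - a)) * ∫ x in a..b, f x| ≤ (b - a) * |f' b| * (2 / ((p + 1) * (p + 2))) ^ (1 / p) *
      ((η ^ (α * q) - 1) / (α * q * Real.log η)) ^ (1 / q)) := by
  have hd : (0:ℝ) < b - a := by linarith
  have hq0 : (0:ℝ) < q := by linarith
  have hα0 : (0:ℝ) < α := hα.1
  have hbpos : (0:ℝ) < b := lt_of_le_of_lt ha hab
  have hamem : a ∈ Set.Icc (0:ℝ) b := ⟨ha, hab.le⟩
  have hbmem : b ∈ Set.Icc (0:ℝ) b := ⟨hbpos.le, le_rfl⟩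
  have h0mem : (0:ℝ) ∈ Set.Icc (0:ℝ) b := ⟨le_rfl, hbpos.le⟩
  -- t-parametrization of points of [a,b]
  have htmem : ∀ x ∈ Set.Icc a b, (b - x) / (b - a) ∈ Set.Icc (0:ℝ) 1 := by
    intro x hx
    exact ⟨div_nonneg (by linarith [hx.2]) hd.le, (div_le_one hd).2 (by linarith [hx.1])⟩
  have hpt : ∀ x : ℝ, ((b - x) / (b - a)) * a + (1 - (b - x) / (b - a)) * b = x := by
    intro x; field_simp; ring
  -- Bernoulli-type bound  α * t ≤ t ^ α
  have htα : ∀ t : ℝ, t ∈ Set.Icc (0:ℝ) 1 → α * t ≤ t ^ α := by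
    intro t ht
    rcases eq_or_lt_of_le ht.1 with h0 | h0
    · rw [← h0]
      simp [Real.zero_rpow hα.1.ne']
    · have h1 : t ^ (1:ℝ) ≤ t ^ α := Real.rpow_le_rpow_of_exponent_ge h0 ht.2 hα.2
      rw [Real.rpow_one] at h1
      nlinarith [ht.1, hα.1, hα.2]
  constructor
  · -- case η = 1
    intro h1
    rw [hη] at h1
    have hb0 : |f' b| ≠ 0 := by
      intro h
      rw [h, div_zero] at h1
      exact one_ne_zero h1.symm
    have hBpos : 0 < |f' b| := lt_of_le_of_ne (abs_nonneg _) (Ne.symm hb0)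
    have hAB : |f' a| = |f' b| := (div_eq_one_iff_eq hb0).1 h1
    have hptw : ∀ x ∈ Set.Icc a b,
        |f' x| ^ q ≤ |f' b| ^ q * Real.exp (0 * ((b - x) / (b - a))) := by
      intro x hx
      have hcv := hconv a hamem b hbmem ((b - x) / (b - a)) (htmem x hx)
      rw [hpt x, hAB] at hcv
      have hBq : 0 < |f' b| ^ q := Real.rpow_pos_of_pos hBpos q
      rw [← Real.rpow_add hBq,
        show ((b - x) / (b - a)) ^ α + (1 - ((b - x) / (b - a)) ^ α) = 1 by ring,
        Real.rpow_one] at hcv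
      simpa [Real.exp_zero] using hcv
    have hmain := aux_main I hIci f f' hderiv a b ha hab hint p q hp hq hpq 0 le_rfl hptw
    have hJ1 : (∫ t in (0:ℝ)..1, Real.exp (0 * t)) = 1 := by simp
    rwa [hJ1, Real.one_rpow, mul_one] at hmain
  · -- case η < 1
    intro h2
    have hRHS0 : η = 0 →
        (b - a) * |f' b| * (2 / ((p + 1) * (p + 2))) ^ (1 / p) *
          ((η ^ (α * q) - 1) / (α * q * Real.log η)) ^ (1 / q) = 0 := by
      intro h0
      rw [h0, Real.zero_rpow (mul_pos hα0 hq0).ne', Real.log_zero, mul_zero, zero_sub,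
        div_zero, Real.zero_rpow (by positivity : 1 / q ≠ 0), mul_zero]
    by_cases hb0 : f' b = 0
    · -- degenerate: f' vanishes on (a,b)
      have hη0 : η = 0 := by rw [hη, hb0, abs_zero, div_zero]
      have h0 : ∀ z ∈ Set.Ioo a b, f' z = 0 := by
        intro z hz
        have hzpos : 0 < z := lt_of_le_of_lt ha hz.1
        have ht : z / b ∈ Set.Icc (0:ℝ) 1 :=
          ⟨by positivity, (div_le_one hbpos).2 hz.2.le⟩
        have hcv := hconv b hbmem 0 h0mem (z / b) ht
        rw [show z / b * b + (1 - z / b) * 0 = z by field_simp; ring, hb0, abs_zero,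
          Real.zero_rpow hq0.ne',
          Real.zero_rpow (Real.rpow_pos_of_pos (div_pos hzpos hbpos) α).ne', zero_mul] at hcv
        have h1 : |f' z| ^ q = 0 := le_antisymm hcv (Real.rpow_nonneg (abs_nonneg _) _)
        by_contra hne
        exact absurd h1 (ne_of_gt (Real.rpow_pos_of_pos (abs_pos.2 hne) q))
      rw [aux_zero I hIci f f' hderiv a b ha hab hint h0, abs_zero, hRHS0 hη0]
    · by_cases ha0 : f' a = 0
      · have hη0 : η = 0 := by rw [hη, ha0, abs_zero, zero_div]
        have h0 : ∀ z ∈ Set.Ioo a b, f' z = 0 := by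
          intro z hz
          have ht : (b - z) / (b - a) ∈ Set.Icc (0:ℝ) 1 := htmem z (Set.Ioo_subset_Icc_self hz)
          have htpos : 0 < (b - z) / (b - a) := by
            apply div_pos (by linarith [hz.2]) hd
          have hcv := hconv a hamem b hbmem ((b - z) / (b - a)) ht
          rw [hpt z, ha0, abs_zero, Real.zero_rpow hq0.ne',
            Real.zero_rpow (Real.rpow_pos_of_pos htpos α).ne', zero_mul] at hcv
          have h1 : |f' z| ^ q = 0 := le_antisymm hcv (Real.rpow_nonneg (abs_nonneg _) _)
          by_contra hne
          exact absurd h1 (ne_of_gt (Real.rpow_pos_of_pos (abs_pos.2 hne) q))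
        rw [aux_zero I hIci f f' hderiv a b ha hab hint h0, abs_zero, hRHS0 hη0]
      · -- main case: 0 < η < 1
        have hBpos : 0 < |f' b| := abs_pos.2 hb0
        have hApos : 0 < |f' a| := abs_pos.2 ha0
        have hηpos : 0 < η := by rw [hη]; positivity
        have hlog : Real.log η < 0 := Real.log_neg hηpos h2
        have hc : α * q * Real.log η < 0 :=
          mul_neg_of_pos_of_neg (by positivity) hlog
        have hA : |f' a| = η * |f' b| := by rw [hη]; field_simp
        have hptw : ∀ x ∈ Set.Icc a b, |f' x| ^ q
            ≤ |f' b| ^ q * Real.exp ((α * q * Real.log η) * ((b - x) / (b - a))) := by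
          intro x hx
          have hcv := hconv a hamem b hbmem ((b - x) / (b - a)) (htmem x hx)
          rw [hpt x] at hcv
          set t := (b - x) / (b - a) with htdef
          refine hcv.trans ?_
          rw [hA, Real.mul_rpow hηpos.le (abs_nonneg _),
            Real.mul_rpow (Real.rpow_nonneg hηpos.le q) (Real.rpow_nonneg (abs_nonneg _) q),
            mul_assoc, ← Real.rpow_add (Real.rpow_pos_of_pos hBpos q),
            show t ^ α + (1 - t ^ α) = 1 by ring, Real.rpow_one, mul_comm]
          refine mul_le_mul_of_nonneg_left ?_ (Real.rpow_nonneg (abs_nonneg _) q)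
          rw [← Real.rpow_mul hηpos.le, Real.rpow_def_of_pos hηpos]
          apply Real.exp_le_exp.2
          have htαt : α * t ≤ t ^ α := htα t (htmem x hx)
          have hlq : Real.log η * q < 0 := mul_neg_of_neg_of_pos hlog hq0
          nlinarith [mul_le_mul_of_nonpos_left htαt hlq.le]
        have hmain := aux_main I hIci f f' hderiv a b ha hab hint p q hp hq hpq
          (α * q * Real.log η) hc.le hptw
        have hJval : (∫ t in (0:ℝ)..1, Real.exp ((α * q * Real.log η) * t))
            = (η ^ (α * q) - 1) / (α * q * Real.log η) := by
          rw [intervalIntegral.integral_comp_mul_left Real.exp hc.ne]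
          simp only [mul_zero, mul_one, integral_exp, Real.exp_zero, smul_eq_mul]
          rw [show Real.exp (α * q * Real.log η) = η ^ (α * q) by
            rw [Real.rpow_def_of_pos hηpos, mul_comm], inv_mul_eq_div]
        rwa [hJval] at hmain
end
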